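/- arXiv:1602.01860 — 6 statements merged into one kernel-verified Lean document; each statement's English description precedes it below -/
import Mathlib

section
/- Suppose the ESP data satisfies Assumption (B), X is continuous with X(0) ∈ G, and (Z,Y) solves the ESP for X. Let (ψ_k) be a sequence in D_r converging to ψ ∈ D_r uniformly on compact subsets of [0,∞), fix T ∈ (0,∞), and suppose that for each k the pair (φ_k,η_k) solves the DP associated with Z for ψ_k on [0,T). Then there exist right-continuous functions with finite left limits φ, η : [0,T) → ℝ^J such that (φ_k,η_k) → (φ,η) uniformly on every compact subinterval of [0,T) as k → ∞, and (φ,η) solves the DP associated with Z for ψ on [0,T). -/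
open scoped RealInnerProductSpace ENNReal NNReal
open Filter Topology Set MeasureTheory

noncomputable section

abbrev EucSp (J : ℕ) : Type := EuclideanSpace ℝ (Fin J)

/-- The convex cone generated by a set of vectors (by convention `coneGen ∅ = {0}`). -/
def coneGen {J : ℕ} (s : Set (EucSp J)) : Set (EucSp J) :=
  { y | ∃ (k : ℕ) (r : Fin k → ℝ) (v : Fin k → EucSp J),
      (∀ i, 0 ≤ r i) ∧ (∀ i, v i ∈ s) ∧ y = ∑ i, r i • v i }

/-- The polyhedral domain `G`. -/
def Gset {J N : ℕ} (n : Fin N → EucSp J) (c : Fin N → ℝ) : Set (EucSp J) :=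
  { x | ∀ i, c i ≤ ⟪x, n i⟫ }

/-- The active index set `I(x)`. -/
def ISet {J N : ℕ} (n : Fin N → EucSp J) (c : Fin N → ℝ) (x : EucSp J) : Set (Fin N) :=
  { i | ⟪x, n i⟫ = c i }

/-- The cone `d(x)` of admissible reflection directions at `x`. -/
def dCone {J N : ℕ} (n : Fin N → EucSp J) (c : Fin N → ℝ) (d : Fin N → EucSp J)
    (x : EucSp J) : Set (EucSp J) :=
  coneGen (d '' ISet n c x)

/-- `(Z, Y)` solves the extended Skorokhod problem for `X`. -/
def SolvesESP {J N : ℕ} (n : Fin N → EucSp J) (c : Fin N → ℝ) (d : Fin N → EucSp J)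
    (X Z Y : ℝ → EucSp J) : Prop :=
  ContinuousOn Z (Ici 0) ∧ ContinuousOn Y (Ici 0) ∧
  Y 0 ∈ dCone n c d (Z 0) ∧
  (∀ t ∈ Ici (0:ℝ), Z t = X t + Y t) ∧
  (∀ t ∈ Ici (0:ℝ), Z t ∈ Gset n c) ∧
  (∀ s t : ℝ, 0 ≤ s → s < t →
    Y t - Y s ∈ coneGen (⋃ u ∈ Ioc s t, dCone n c d (Z u)))

/-- Assumption (B). -/
def AssumptionB {J N : ℕ} (n d : Fin N → EucSp J) : Prop :=
  ∃ δ : ℝ, 0 < δ ∧ ∃ B : Set (EucSp J),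
    IsCompact B ∧ Convex ℝ B ∧ (∀ z ∈ B, -z ∈ B) ∧ (0 : EucSp J) ∈ interior B ∧
    ∀ i : Fin N, ∀ z ∈ frontier B, |⟪z, n i⟫| < δ →
      ∀ ν : EucSp J, ‖ν‖ = 1 → (∀ y ∈ B, 0 ≤ ⟪ν, y - z⟫) → ⟪ν, d i⟫ = 0

/-- Assumption (π). -/
def AssumptionPi {J N : ℕ} (n : Fin N → EucSp J) (c : Fin N → ℝ) (d : Fin N → EucSp J)
    (proj : EucSp J → EucSp J) : Prop :=
  (∀ x, proj x ∈ Gset n c) ∧ (∀ x ∈ Gset n c, proj x = x) ∧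
  (∀ x, x ∉ Gset n c → proj x - x ∈ dCone n c d (proj x))

/-- The supremum norm `‖f‖_T` of `f` over `[0, T]`. -/
def supNorm {J : ℕ} (f : ℝ → EucSp J) (T : ℝ) : ℝ :=
  ⨆ s : Icc (0:ℝ) T, ‖f s.1‖

/-- The subspace (as a set) `H_x`. -/
def Hset {J N : ℕ} (n : Fin N → EucSp J) (c : Fin N → ℝ) (x : EucSp J) : Set (EucSp J) :=
  { y | ∀ i ∈ ISet n c x, ⟪y, n i⟫ = 0 }

/-- The smooth part `S` of the boundary. -/
def Sstar {J N : ℕ} (n : Fin N → EucSp J) (c : Fin N → ℝ) : Set (EucSp J) :=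
  { x ∈ frontier (Gset n c) | (ISet n c x).ncard = 1 }

/-- The nonsmooth part `N` of the boundary. -/
def Nstar {J N : ℕ} (n : Fin N → EucSp J) (c : Fin N → ℝ) : Set (EucSp J) :=
  { x ∈ frontier (Gset n c) | 2 ≤ (ISet n c x).ncard }

/-- The set `W`. -/
def Wstar {J N : ℕ} (n : Fin N → EucSp J) (c : Fin N → ℝ) (d : Fin N → EucSp J) :
    Set (EucSp J) :=
  { x ∈ Nstar n c | Submodule.span ℝ (Hset n c x ∪ dCone n c d x) ≠ ⊤ }

/-- The boundary jitter property on `[0, T)`. -/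
def Jitter {J N : ℕ} (n : Fin N → EucSp J) (c : Fin N → ℝ) (Z Y : ℝ → EucSp J)
    (T : ℝ≥0∞) : Prop :=
  (∀ t : ℝ, 0 ≤ t → ENNReal.ofReal t < T → Z t ∈ Sstar n c →
    ∀ s u : ℝ, s < t → t < u → ENNReal.ofReal u < T →
      ∃ a ∈ Ioo (max s 0) u, ∃ b ∈ Ioo (max s 0) u, Y a ≠ Y b) ∧
  (volume {t : ℝ | 0 ≤ t ∧ ENNReal.ofReal t < T ∧ Z t ∈ Nstar n c} = 0) ∧
  (Z 0 ∈ Nstar n c →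
    ∀ i ∈ ISet n c (Z 0), ∀ δ : ℝ, 0 < δ → ENNReal.ofReal δ < T →
      ∃ u ∈ Ioo (0:ℝ) δ, ISet n c (Z u) = {i}) ∧
  (∀ t : ℝ, 0 < t → ENNReal.ofReal t < T → Z t ∈ Nstar n c →
    ∀ i ∈ ISet n c (Z t), ∀ δ : ℝ, 0 < δ → δ < t →
      ∃ s ∈ Ioo (t - δ) t, ISet n c (Z s) = {i})

/-- `f` is right-continuous with finite left limits on `[0, T)`. -/
def DrOn {J : ℕ} (f : ℝ → EucSp J) (T : ℝ≥0∞) : Prop :=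
  (∀ t : ℝ, 0 ≤ t → ENNReal.ofReal t < T → Tendsto f (𝓝[>] t) (𝓝 (f t))) ∧
  (∀ t : ℝ, 0 < t → ENNReal.ofReal t < T → ∃ L, Tendsto f (𝓝[<] t) (𝓝 L))

/-- `f ∈ D_{ℓ,r}([0,T))`. -/
def DlrOn {J : ℕ} (f : ℝ → EucSp J) (T : ℝ≥0∞) : Prop :=
  (∀ t : ℝ, 0 < t → ENNReal.ofReal t < T → ∃ L, Tendsto f (𝓝[<] t) (𝓝 L)) ∧
  (∀ t : ℝ, 0 ≤ t → ENNReal.ofReal t < T → ∃ L, Tendsto f (𝓝[>] t) (𝓝 L)) ∧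
  (∀ t : ℝ, 0 < t → ENNReal.ofReal t < T →
    Tendsto f (𝓝[<] t) (𝓝 (f t)) ∨ Tendsto f (𝓝[>] t) (𝓝 (f t)))

/-- `(φ, η)` solves the derivative problem associated with `Z` for `ψ` on `[0, T)`. -/
def SolvesDPOn {J N : ℕ} (n : Fin N → EucSp J) (c : Fin N → ℝ) (d : Fin N → EucSp J)
    (Z ψ φ η : ℝ → EucSp J) (T : ℝ≥0∞) : Prop :=
  DrOn φ T ∧ DrOn η T ∧
  η 0 ∈ Submodule.span ℝ (dCone n c d (Z 0)) ∧
  (∀ t : ℝ, 0 ≤ t → ENNReal.ofReal t < T →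
    φ t = ψ t + η t ∧ φ t ∈ Hset n c (Z t)) ∧
  (∀ s t : ℝ, 0 ≤ s → s < t → ENNReal.ofReal t < T →
    η t - η s ∈ Submodule.span ℝ (⋃ u ∈ Ioc s t, dCone n c d (Z u)))

/-- Decomposition `Y = R L` where the components of `L` are nondecreasing and can
increase only when `Z` is on the corresponding face. -/
def LocalTimeProps {J N : ℕ} (n : Fin N → EucSp J) (c : Fin N → ℝ) (d : Fin N → EucSp J)
    (Z Y : ℝ → EucSp J) (L : ℝ → EucSp N) : Prop :=
  ContinuousOn L (Ici 0) ∧ L 0 = 0 ∧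
  (∀ t ∈ Ici (0:ℝ), ∀ i, 0 ≤ L t i) ∧
  (∀ i, MonotoneOn (fun t => L t i) (Ici 0)) ∧
  (∀ t ∈ Ici (0:ℝ), Y t = ∑ i, L t i • d i) ∧
  (∀ i : Fin N, ∀ s t : ℝ, 0 ≤ s → s ≤ t →
    (∀ u ∈ Icc s t, Z u ∉ {x ∈ frontier (Gset n c) | ⟪x, n i⟫ = c i}) →
    L s i = L t i)

/-- The dual set `B*`. -/
def dualSet {J : ℕ} (B : Set (EucSp J)) : Set (EucSp J) :=
  { y | ∀ z ∈ B, ⟪y, z⟫ ≤ 1 }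

/-- `frontComp Ls k y = Ls 0 (Ls 1 (⋯ (Ls (k-1) y)))`. -/
def frontComp {J : ℕ} (Ls : ℕ → (EucSp J → EucSp J)) : ℕ → EucSp J → EucSp J
  | 0, y => y
  | (k+1), y => frontComp Ls k (Ls k y)

/-- `backComp Ls k y = Ls (k-1) (⋯ (Ls 0 y))`. -/
def backComp {J : ℕ} (Ls : ℕ → (EucSp J → EucSp J)) : ℕ → EucSp J → EucSp J
  | 0, y => y
  | (k+1), y => Ls k (backComp Ls k y)


section ClosureAux

variable {J N : ℕ}

lemma coneGen_subset_submodule {s : Set (EucSp J)} {K : Submodule ℝ (EucSp J)}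
    (h : s ⊆ (K : Set (EucSp J))) : coneGen s ⊆ (K : Set (EucSp J)) := by
  rintro y ⟨k, r, v, _hr, hv, rfl⟩
  exact Submodule.sum_mem _ fun i _ => K.smul_mem _ (h (hv i))

/-- Support functional at a point of positive gauge, orthogonal to the directions `d i`
for which the normalized point is `δ`-close to the hyperplane of `n i`. -/
lemma exists_support_functional
    (n d : Fin N → EucSp J) (δ : ℝ) (B : Set (EucSp J))
    (hBcl : IsClosed B) (hBconv : Convex ℝ B) (hB0 : (0 : EucSp J) ∈ interior B)
    (hBn : ∀ i : Fin N, ∀ z ∈ frontier B, |⟪z, n i⟫| < δ →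
      ∀ ν : EucSp J, ‖ν‖ = 1 → (∀ y ∈ B, 0 ≤ ⟪ν, y - z⟫) → ⟪ν, d i⟫ = 0)
    (x : EucSp J) (hx : 0 < gauge B x) :
    ∃ p : EucSp J, ⟪p, x⟫ = gauge B x ∧ (∀ y, ⟪p, y⟫ ≤ gauge B y) ∧
      (∀ i, |⟪x, n i⟫| < δ * gauge B x → ⟪p, d i⟫ = 0) := by
  have hBnhds : B ∈ 𝓝 (0 : EucSp J) := mem_interior_iff_mem_nhds.1 hB0
  have habs : Absorbent ℝ B := absorbent_nhds_zero hBnhds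
  set z : EucSp J := (gauge B x)⁻¹ • x with hzdef
  have hgz : gauge B z = 1 := by
    rw [hzdef, gauge_smul_of_nonneg (inv_nonneg.2 hx.le), smul_eq_mul,
      inv_mul_cancel₀ hx.ne']
  have hzfr : z ∈ frontier B := (gauge_eq_one_iff_mem_frontier hBconv hBnhds).1 hgz
  obtain ⟨f, hf⟩ := geometric_hahn_banach_open_point (hBconv.interior) isOpen_interior hzfr.2
  have hfz : 0 < f z := by simpa using hf 0 hB0
  have hfB : ∀ y ∈ B, f y ≤ f z := by
    intro y hy
    have hkey : ∀ θ : ℝ, 0 < θ → θ ≤ 1 → (1 - θ) * f y < f z := by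
      intro θ hθ hθ1
      have hmem : θ • (0 : EucSp J) + (1 - θ) • y ∈ interior B :=
        hBconv.combo_interior_self_mem_interior hB0 hy hθ (by linarith) (by ring)
      have := hf _ hmem
      simpa using this
    have htt : Tendsto (fun k : ℕ => (1 - 1/(k+1 : ℝ)) * f y) atTop (𝓝 (f y)) := by
      have h1 : Tendsto (fun k : ℕ => 1/(k+1 : ℝ)) atTop (𝓝 0) :=
        tendsto_one_div_add_atTop_nhds_zero_nat
      have := ((tendsto_const_nhds (α := ℕ) (x := (1:ℝ))).sub h1).mul_const (f y)
      simpa using this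
    refine le_of_tendsto htt (Filter.Eventually.of_forall fun k => ?_)
    refine le_of_lt (hkey (1/(k+1)) (by positivity) ?_)
    rw [div_le_one (by positivity)]
    have : (0:ℝ) ≤ (k:ℝ) := Nat.cast_nonneg k
    linarith
  set pv : EucSp J := (f z)⁻¹ • ((InnerProductSpace.toDual ℝ (EucSp J)).symm f) with hpvdef
  have hpapp : ∀ y, ⟪pv, y⟫ = (f z)⁻¹ * f y := by
    intro y
    rw [hpvdef, real_inner_smul_left, InnerProductSpace.toDual_symm_apply]
  have hpB : ∀ y ∈ B, ⟪pv, y⟫ ≤ 1 := by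
    intro y hy
    rw [hpapp, inv_mul_le_iff₀ hfz, mul_one]
    exact hfB y hy
  have hpz : ⟪pv, z⟫ = 1 := by rw [hpapp, inv_mul_cancel₀ hfz.ne']
  have hple : ∀ y, ⟪pv, y⟫ ≤ gauge B y := by
    intro y
    refine le_csInf (habs.gauge_set_nonempty) ?_
    rintro r ⟨hr, hyr⟩
    obtain ⟨b, hb, rfl⟩ := hyr
    rw [real_inner_smul_right]
    calc r * ⟪pv, b⟫ ≤ r * 1 := mul_le_mul_of_nonneg_left (hpB b hb) hr.le
      _ = r := mul_one r
  have hpx : ⟪pv, x⟫ = gauge B x := by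
    have hxz : gauge B x • z = x := by
      rw [hzdef, smul_inv_smul₀ hx.ne']
    calc ⟪pv, x⟫ = ⟪pv, gauge B x • z⟫ := by rw [hxz]
      _ = gauge B x * ⟪pv, z⟫ := real_inner_smul_right _ _ _
      _ = gauge B x := by rw [hpz, mul_one]
  refine ⟨pv, hpx, hple, ?_⟩
  intro i hi
  have hzi : |⟪z, n i⟫| < δ := by
    rw [hzdef, real_inner_smul_left, abs_mul, abs_inv, abs_of_pos hx, inv_mul_lt_iff₀ hx]
    calc |⟪x, n i⟫| < δ * gauge B x := hi
      _ = gauge B x * δ := mul_comm _ _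
  have hpvne : pv ≠ 0 := by
    intro h
    rw [h] at hpz
    simpa using hpz
  have hpvnorm : 0 < ‖pv‖ := norm_pos_iff.2 hpvne
  set ν : EucSp J := -(‖pv‖⁻¹ • pv) with hνdef
  have hνnorm : ‖ν‖ = 1 := by
    rw [hνdef, norm_neg, norm_smul, norm_inv, norm_norm, inv_mul_cancel₀ hpvnorm.ne']
  have hνin : ∀ y ∈ B, 0 ≤ ⟪ν, y - z⟫ := by
    intro y hy
    rw [hνdef, inner_neg_left, real_inner_smul_left, inner_sub_right, hpz]
    have h1 : ⟪pv, y⟫ ≤ 1 := hpB y hy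
    have : ‖pv‖⁻¹ * (⟪pv, y⟫ - 1) ≤ 0 := by
      apply mul_nonpos_of_nonneg_of_nonpos (inv_nonneg.2 hpvnorm.le)
      linarith
    linarith
  have hν0 : ⟪ν, d i⟫ = 0 := hBn i z hzfr hzi ν hνnorm hνin
  rw [hνdef, inner_neg_left, real_inner_smul_left, neg_eq_zero] at hν0
  rcases mul_eq_zero.1 hν0 with h | h
  · exact absurd h (by positivity)
  · exact h

lemma norm_le_R_gauge (B : Set (EucSp J)) (hBc : IsCompact B)
    (hB0 : (0 : EucSp J) ∈ interior B) :
    ∃ R : ℝ, 0 < R ∧ ∀ x : EucSp J, ‖x‖ ≤ R * gauge B x := by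
  obtain ⟨R, hsub⟩ := hBc.isBounded.subset_closedBall 0
  have habs : Absorbent ℝ B := absorbent_nhds_zero (mem_interior_iff_mem_nhds.1 hB0)
  refine ⟨max R 1, lt_max_of_lt_right one_pos, fun x => ?_⟩
  have h1 : B ⊆ Metric.closedBall 0 (max R 1) :=
    hsub.trans (Metric.closedBall_subset_closedBall (le_max_left _ _))
  have h2 := le_gauge_of_subset_closedBall (x := x) habs (le_trans zero_le_one (le_max_right R 1)) h1
  rw [div_le_iff₀ (lt_max_of_lt_right one_pos)] at h2
  calc ‖x‖ ≤ gauge B x * max R 1 := h2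
    _ = max R 1 * gauge B x := mul_comm _ _

/-- A priori bound for solutions of the derivative problem. -/
lemma dp_apriori_bound
    (n d : Fin N → EucSp J) (c : Fin N → ℝ)
    (hn : ∀ i, ‖n i‖ = 1)
    (δ : ℝ) (hδ : 0 < δ) (B : Set (EucSp J))
    (hBc : IsCompact B) (hBconv : Convex ℝ B) (hB0 : (0 : EucSp J) ∈ interior B)
    (hBn : ∀ i : Fin N, ∀ z ∈ frontier B, |⟪z, n i⟫| < δ →
      ∀ ν : EucSp J, ‖ν‖ = 1 → (∀ y ∈ B, 0 ≤ ⟪ν, y - z⟫) → ⟪ν, d i⟫ = 0)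
    (Z : ℝ → EucSp J) (hZcont : ContinuousOn Z (Ici 0))
    (hZG : ∀ t ∈ Ici (0:ℝ), Z t ∈ Gset n c)
    (T : ℝ) (ψ φ η : ℝ → EucSp J)
    (hsol : SolvesDPOn n c d Z ψ φ η (ENNReal.ofReal T))
    (t : ℝ) (ht0 : 0 ≤ t) (htT : t < T) (M : ℝ)
    (hM : ∀ v ∈ Icc (0:ℝ) t, ‖ψ v‖ ≤ M) :
    ∀ u ∈ Icc (0:ℝ) t, gauge B (η u) ≤ M / δ := by
  have hT0 : 0 < T := lt_of_le_of_lt ht0 htT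
  have hBnhds : B ∈ 𝓝 (0 : EucSp J) := mem_interior_iff_mem_nhds.1 hB0
  have hofR : ∀ {v : ℝ}, v ≤ t → ENNReal.ofReal v < ENNReal.ofReal T := by
    intro v hv
    exact (ENNReal.ofReal_lt_ofReal_iff hT0).2 (lt_of_le_of_lt hv htT)
  have hM0 : 0 ≤ M := le_trans (norm_nonneg _) (hM 0 ⟨le_refl 0, ht0⟩)
  have hK0 : 0 ≤ M / δ := div_nonneg hM0 hδ.le
  -- pinning of η at active boundary times
  have hpin : ∀ v ∈ Icc (0:ℝ) t, ∀ i ∈ ISet n c (Z v), |⟪η v, n i⟫| ≤ M := by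
    intro v hv i hi
    obtain ⟨he, hH⟩ := hsol.2.2.2.1 v hv.1 (hofR hv.2)
    have h0 : ⟪φ v, n i⟫ = 0 := hH i hi
    rw [he, inner_add_left] at h0
    have : ⟪η v, n i⟫ = -⟪ψ v, n i⟫ := by linarith
    rw [this, abs_neg]
    calc |⟪ψ v, n i⟫| ≤ ‖ψ v‖ * ‖n i‖ := abs_real_inner_le_norm _ _
      _ = ‖ψ v‖ := by rw [hn i, mul_one]
      _ ≤ M := hM v hv
  -- key: support functional orthogonal to all active directions
  have hkey : ∀ σ ∈ Icc (0:ℝ) t, M / δ < gauge B (η σ) →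
      ∃ p : EucSp J, (∀ y, ⟪p, y⟫ ≤ gauge B y) ∧ ⟪p, η σ⟫ = gauge B (η σ) ∧
        ∀ i ∈ ISet n c (Z σ), ⟪p, d i⟫ = 0 := by
    intro σ hσ hgt
    have hgpos : 0 < gauge B (η σ) := lt_of_le_of_lt hK0 hgt
    obtain ⟨p, hp1, hp2, hp3⟩ :=
      exists_support_functional n d δ B hBc.isClosed hBconv hB0 hBn (η σ) hgpos
    refine ⟨p, hp2, hp1, fun i hi => hp3 i ?_⟩
    calc |⟪η σ, n i⟫| ≤ M := hpin σ hσ i hi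
      _ = δ * (M / δ) := by field_simp
      _ < δ * gauge B (η σ) := by exact mul_lt_mul_of_pos_left hgt hδ
  -- bound at time 0
  have h0bound : gauge B (η 0) ≤ M / δ := by
    by_contra hcon
    push_neg at hcon
    obtain ⟨p, hp2, hp1, hp3⟩ := hkey 0 ⟨le_refl 0, ht0⟩ hcon
    have hker : Submodule.span ℝ (dCone n c d (Z 0)) ≤ LinearMap.ker ((innerSL ℝ p : EucSp J →L[ℝ] ℝ) : EucSp J →ₗ[ℝ] ℝ) := by
      rw [Submodule.span_le]
      refine coneGen_subset_submodule ?_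
      rintro y ⟨i, hi, rfl⟩
      simpa [LinearMap.mem_ker] using hp3 i hi
    have h0 : ⟪p, η 0⟫ = 0 := by
      have := hker hsol.2.2.1
      simpa [LinearMap.mem_ker] using this
    rw [hp1] at h0
    have : 0 < gauge B (η 0) := lt_of_le_of_lt hK0 hcon
    linarith
  -- the main argument: no bad time
  intro u hu
  by_contra hgt
  push_neg at hgt
  set K : ℝ := M / δ with hKdef
  set ε : ℝ := gauge B (η u) - K with hεdef
  have hε : 0 < ε := by rw [hεdef]; linarith
  set Bad : Set ℝ := {v : ℝ | v ∈ Icc (0:ℝ) t ∧ K + ε ≤ gauge B (η v)} with hBaddef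
  have hBadne : u ∈ Bad := ⟨hu, by rw [hεdef]; linarith⟩
  have hBadbdd : BddBelow Bad := ⟨0, fun v hv => hv.1.1⟩
  set u₀ : ℝ := sInf Bad with hu₀def
  have hu₀Icc : u₀ ∈ Icc (0:ℝ) t :=
    ⟨le_csInf ⟨u, hBadne⟩ (fun v hv => hv.1.1), le_trans (csInf_le hBadbdd hBadne) hu.2⟩
  have hηrc : Tendsto η (𝓝[Ici u₀] u₀) (𝓝 (η u₀)) := by
    have h1 : Tendsto η (𝓝[>] u₀) (𝓝 (η u₀)) := hsol.2.1.1 u₀ hu₀Icc.1 (hofR hu₀Icc.2)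
    rw [← Set.Ioi_insert, nhdsWithin_insert]
    exact Tendsto.sup (tendsto_pure_nhds η u₀) h1
  have hcontg : Continuous (gauge B) := continuous_gauge hBconv hBnhds
  have hu₀Bad : u₀ ∈ Bad := by
    refine ⟨hu₀Icc, ?_⟩
    have hcl : u₀ ∈ closure Bad := csInf_mem_closure ⟨u, hBadne⟩ hBadbdd
    have hne : (𝓝[Bad] u₀).NeBot := mem_closure_iff_nhdsWithin_neBot.1 hcl
    have hmono : 𝓝[Bad] u₀ ≤ 𝓝[Ici u₀] u₀ :=
      nhdsWithin_mono _ (fun v hv => csInf_le hBadbdd hv)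
    have htend : Tendsto (fun v => gauge B (η v)) (𝓝[Bad] u₀) (𝓝 (gauge B (η u₀))) :=
      (hcontg.tendsto _).comp (hηrc.mono_left hmono)
    exact ge_of_tendsto htend (eventually_mem_nhdsWithin.mono fun v hv => hv.2)
  by_cases hA : ∃ v, 0 < v ∧ v ≤ u₀ ∧ (ISet n c (Z v)).Nonempty
  · -- there is a last active time σ
    obtain ⟨v₀, hv₀pos, hv₀le, hv₀act⟩ := hA
    set A : Set ℝ := {v : ℝ | 0 < v ∧ v ≤ u₀ ∧ (ISet n c (Z v)).Nonempty} with hAdef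
    have hAne : A.Nonempty := ⟨v₀, hv₀pos, hv₀le, hv₀act⟩
    have hAbdd : BddAbove A := ⟨u₀, fun v hv => hv.2.1⟩
    set σ : ℝ := sSup A with hσdef
    have hσv₀ : v₀ ≤ σ := le_csSup hAbdd ⟨hv₀pos, hv₀le, hv₀act⟩
    have hσpos : 0 < σ := lt_of_lt_of_le hv₀pos hσv₀
    have hσle : σ ≤ u₀ := csSup_le hAne fun v hv => hv.2.1
    have hσIcc : σ ∈ Icc (0:ℝ) t := ⟨hσpos.le, le_trans hσle hu₀Icc.2⟩
    have hσact : (ISet n c (Z σ)).Nonempty := by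
      have hcl : σ ∈ closure A := csSup_mem_closure hAne hAbdd
      have hA' : A ⊆ ⋃ i : Fin N, {v : ℝ | v ∈ Icc (0:ℝ) u₀ ∧ ⟪Z v, n i⟫ = c i} := by
        rintro v ⟨h1, h2, i, hi⟩
        exact mem_iUnion.2 ⟨i, ⟨⟨h1.le, h2⟩, hi⟩⟩
      have hclosed : IsClosed (⋃ i : Fin N, {v : ℝ | v ∈ Icc (0:ℝ) u₀ ∧ ⟪Z v, n i⟫ = c i}) := by
        apply isClosed_iUnion_of_finite
        intro i
        have hcont : ContinuousOn (fun v => ⟪Z v, n i⟫) (Icc (0:ℝ) u₀) :=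
          (hZcont.mono (Icc_subset_Ici_self)).inner continuousOn_const
        have h1 := hcont.preimage_isClosed_of_isClosed isClosed_Icc
          (isClosed_singleton (x := c i))
        exact h1
      have := (closure_minimal hA' hclosed) hcl
      obtain ⟨i, hmem⟩ := mem_iUnion.1 this
      exact ⟨i, hmem.2⟩
    have hηu₀σ : η u₀ = η σ := by
      rcases eq_or_lt_of_le hσle with heq | hlt
      · rw [heq]
      · have hsp := hsol.2.2.2.2 σ u₀ hσpos.le hlt (hofR hu₀Icc.2)
        have hbot : Submodule.span ℝ (⋃ v ∈ Ioc σ u₀, dCone n c d (Z v)) ≤ ⊥ := by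
          rw [Submodule.span_le]
          refine iUnion₂_subset fun v hv => ?_
          have hempty : ISet n c (Z v) = ∅ := by
            by_contra hne
            have hvA : v ∈ A :=
              ⟨lt_trans hσpos hv.1, hv.2, Set.nonempty_iff_ne_empty.2 hne⟩
            exact absurd (le_csSup hAbdd hvA) (not_le.2 hv.1)
          rw [dCone, hempty, Set.image_empty]
          exact coneGen_subset_submodule (Set.empty_subset _)
        have := hbot hsp
        rw [Submodule.mem_bot] at this
        exact (sub_eq_zero.1 this)
    have hgσ : K + ε ≤ gauge B (η σ) := by rw [← hηu₀σ]; exact hu₀Bad.2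
    have hgtσ : K < gauge B (η σ) := by linarith
    obtain ⟨p, hple, hpeq, hpd⟩ := hkey σ hσIcc hgtσ
    -- inactive constraints stay inactive slightly before σ
    have hnear : ∀ᶠ v in 𝓝[Ici 0] σ, ∀ i, i ∉ ISet n c (Z σ) → ⟪Z v, n i⟫ ≠ c i := by
      refine eventually_all.2 fun i => ?_
      by_cases hi : i ∈ ISet n c (Z σ)
      · exact Filter.Eventually.of_forall fun v h => absurd hi h
      · have hlt : c i < ⟪Z σ, n i⟫ :=
          lt_of_le_of_ne (hZG σ hσpos.le i) (fun h => hi h.symm)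
        have hcont : Tendsto (fun v => ⟪Z v, n i⟫) (𝓝[Ici 0] σ) (𝓝 ⟪Z σ, n i⟫) :=
          ((hZcont σ hσpos.le).inner (continuousWithinAt_const (b := n i)))
        have h2 : ∀ᶠ v in 𝓝[Ici 0] σ, c i < ⟪Z v, n i⟫ :=
          hcont.eventually (eventually_gt_nhds hlt)
        exact h2.mono fun v hv _ => ne_of_gt hv
    rw [Filter.eventually_iff] at hnear
    obtain ⟨ε₁, hε₁pos, hball⟩ := Metric.mem_nhdsWithin_iff.1 hnear
    set s : ℝ := max (σ/2) (σ - ε₁/2) with hsdef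
    have hs0 : 0 < s := lt_max_of_lt_left (half_pos hσpos)
    have hsσ : s < σ := max_lt (half_lt_self hσpos) (by linarith)
    have hIoc : ∀ v ∈ Ioc s σ, ISet n c (Z v) ⊆ ISet n c (Z σ) := by
      intro v hv i hiv
      by_contra hi
      have hvball : v ∈ Metric.ball σ ε₁ ∩ Ici 0 := by
        constructor
        · rw [Metric.mem_ball, Real.dist_eq, abs_sub_lt_iff]
          have hvs : s < v := hv.1
          have h1 : σ - ε₁/2 ≤ s := le_max_right _ _
          constructor <;> linarith [hv.2]
        · exact le_of_lt (lt_trans hs0 hv.1)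
      exact hball hvball i hi hiv
    have hinc := hsol.2.2.2.2 s σ hs0.le hsσ (hofR hσIcc.2)
    have hker : Submodule.span ℝ (⋃ v ∈ Ioc s σ, dCone n c d (Z v)) ≤
        LinearMap.ker ((innerSL ℝ p : EucSp J →L[ℝ] ℝ) : EucSp J →ₗ[ℝ] ℝ) := by
      rw [Submodule.span_le]
      refine iUnion₂_subset fun v hv => ?_
      refine coneGen_subset_submodule ?_
      rintro y ⟨i, hi, rfl⟩
      simpa [LinearMap.mem_ker] using hpd i (hIoc v hv hi)
    have hzero : ⟪p, η σ - η s⟫ = 0 := by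
      have := hker hinc
      simpa [LinearMap.mem_ker] using this
    have hges : K + ε ≤ gauge B (η s) := by
      rw [inner_sub_right] at hzero
      have h1 : ⟪p, η s⟫ = gauge B (η σ) := by linarith [hpeq]
      linarith [hple (η s)]
    have hsBad : s ∈ Bad := ⟨⟨hs0.le, le_trans hsσ.le hσIcc.2⟩, hges⟩
    have : u₀ ≤ s := csInf_le hBadbdd hsBad
    linarith [lt_of_lt_of_le hsσ hσle]
  · -- no active time in (0, u₀]: η u₀ = η 0
    push_neg at hA
    have hηu₀ : η u₀ = η 0 := by
      rcases eq_or_lt_of_le hu₀Icc.1 with heq | hlt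
      · rw [← heq]
      · have hsp := hsol.2.2.2.2 0 u₀ (le_refl 0) hlt (hofR hu₀Icc.2)
        have hbot : Submodule.span ℝ (⋃ v ∈ Ioc (0:ℝ) u₀, dCone n c d (Z v)) ≤ ⊥ := by
          rw [Submodule.span_le]
          refine iUnion₂_subset fun v hv => ?_
          have hempty : ISet n c (Z v) = ∅ := hA v hv.1 hv.2
          rw [dCone, hempty, Set.image_empty]
          exact coneGen_subset_submodule (Set.empty_subset _)
        have := hbot hsp
        rw [Submodule.mem_bot] at this
        exact (sub_eq_zero.1 this)
    have := hu₀Bad.2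
    rw [hηu₀] at this
    linarith [h0bound]

lemma DrOn.sub' {J : ℕ} {f g : ℝ → EucSp J} {T : ℝ≥0∞} (hf : DrOn f T) (hg : DrOn g T) :
    DrOn (fun x => f x - g x) T := by
  constructor
  · intro t ht hT
    exact (hf.1 t ht hT).sub (hg.1 t ht hT)
  · intro t ht hT
    obtain ⟨L1, h1⟩ := hf.2 t ht hT
    obtain ⟨L2, h2⟩ := hg.2 t ht hT
    exact ⟨L1 - L2, h1.sub h2⟩

lemma SolvesDPOn.sub {J N : ℕ} {n d : Fin N → EucSp J} {c : Fin N → ℝ}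
    {Z ψ1 φ1 η1 ψ2 φ2 η2 : ℝ → EucSp J} {T : ℝ≥0∞}
    (h1 : SolvesDPOn n c d Z ψ1 φ1 η1 T) (h2 : SolvesDPOn n c d Z ψ2 φ2 η2 T) :
    SolvesDPOn n c d Z (fun x => ψ1 x - ψ2 x) (fun x => φ1 x - φ2 x)
      (fun x => η1 x - η2 x) T := by
  refine ⟨h1.1.sub' h2.1, h1.2.1.sub' h2.2.1, ?_, ?_, ?_⟩
  · exact Submodule.sub_mem _ h1.2.2.1 h2.2.2.1
  · intro t ht hT
    obtain ⟨e1, hH1⟩ := h1.2.2.2.1 t ht hT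
    obtain ⟨e2, hH2⟩ := h2.2.2.2.1 t ht hT
    constructor
    · show φ1 t - φ2 t = (ψ1 t - ψ2 t) + (η1 t - η2 t)
      rw [e1, e2]; abel
    · intro i hi
      show ⟪φ1 t - φ2 t, n i⟫ = 0
      rw [inner_sub_left, hH1 i hi, hH2 i hi, sub_zero]
  · intro s t hs hst hT
    have := Submodule.sub_mem _ (h1.2.2.2.2 s t hs hst hT) (h2.2.2.2.2 s t hs hst hT)
    have heq : (η1 t - η1 s) - (η2 t - η2 s) = (η1 t - η2 t) - (η1 s - η2 s) := by abel
    rw [heq] at this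
    exact this

end ClosureAux

/-- **Lemma (closure property of the derivative map).**
Under Assumption (B), if `ψ_k → ψ` uniformly on compacts and `(φ_k, η_k)` solves the DP
associated with `Z` for `ψ_k` on `[0,T)` for each `k`, then there is a pair `(φ,η)` of
right-continuous functions with finite left limits on `[0,T)` such that `(φ_k,η_k) → (φ,η)`
uniformly on compact subintervals of `[0,T)` and `(φ,η)` solves the DP for `ψ` on `[0,T)`. -/
theorem statement10 (J N : ℕ) (hJ : 1 ≤ J) (hN : 1 ≤ N)
    (n d : Fin N → EucSp J) (c : Fin N → ℝ)
    (hn : ∀ i, ‖n i‖ = 1) (hdn : ∀ i, ⟪d i, n i⟫ = 1)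
    (hGne : (Gset n c).Nonempty)
    (hB : AssumptionB n d)
    (X Z Y : ℝ → EucSp J) (hX : ContinuousOn X (Ici 0)) (hX0 : X 0 ∈ Gset n c)
    (hZY : SolvesESP n c d X Z Y)
    (ψk : ℕ → (ℝ → EucSp J)) (ψ : ℝ → EucSp J)
    (hψkDr : ∀ k, DrOn (ψk k) ⊤) (hψDr : DrOn ψ ⊤)
    (hconv : ∀ T' : ℝ, 0 ≤ T' → TendstoUniformlyOn (fun k => ψk k) ψ atTop (Icc 0 T'))
    (T : ℝ) (hT : 0 < T)
    (φk ηk : ℕ → (ℝ → EucSp J))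
    (hDP : ∀ k, SolvesDPOn n c d Z (ψk k) (φk k) (ηk k) (ENNReal.ofReal T)) :
    ∃ φ η : ℝ → EucSp J,
      (∀ T' : ℝ, 0 ≤ T' → T' < T →
        TendstoUniformlyOn (fun k => φk k) φ atTop (Icc 0 T') ∧
        TendstoUniformlyOn (fun k => ηk k) η atTop (Icc 0 T')) ∧
      SolvesDPOn n c d Z ψ φ η (ENNReal.ofReal T) := by
  classical
  obtain ⟨δ, hδ, B, hBc, hBconv, hBsym, hB0, hBn⟩ := hB
  obtain ⟨R, hR, hRg⟩ := norm_le_R_gauge B hBc hB0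
  have hZcont : ContinuousOn Z (Ici 0) := hZY.1
  have hZG : ∀ t ∈ Ici (0:ℝ), Z t ∈ Gset n c := hZY.2.2.2.2.1
  have hofR : ∀ {v : ℝ}, v < T → ENNReal.ofReal v < ENNReal.ofReal T := fun hv =>
    (ENNReal.ofReal_lt_ofReal_iff hT).2 hv
  -- uniform Cauchy property of (ηk)
  have hUC : ∀ T' : ℝ, 0 ≤ T' → T' < T →
      UniformCauchySeqOn (fun k => ηk k) atTop (Icc (0:ℝ) T') := by
    intro T' hT'0 hT'T
    rw [Metric.uniformCauchySeqOn_iff]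
    intro ε hε
    set ε' : ℝ := (ε * δ) / (2 * R) with hε'def
    have hε' : 0 < ε' := by positivity
    have hψC := (hconv T' hT'0).uniformCauchySeqOn
    rw [Metric.uniformCauchySeqOn_iff] at hψC
    obtain ⟨K0, hK0⟩ := hψC ε' hε'
    refine ⟨K0, fun m hm k hk x hx => ?_⟩
    have hsub := (hDP m).sub (hDP k)
    have hMb : ∀ v ∈ Icc (0:ℝ) T', ‖ψk m v - ψk k v‖ ≤ ε' := by
      intro v hv
      have := hK0 m hm k hk v hv
      rw [dist_eq_norm] at this
      exact this.le
    have hbound := dp_apriori_bound n d c hn δ hδ B hBc hBconv hB0 hBn Z hZcont hZG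
      T _ _ _ hsub T' hT'0 hT'T ε' hMb x hx
    rw [dist_eq_norm]
    calc ‖ηk m x - ηk k x‖ ≤ R * gauge B (ηk m x - ηk k x) := hRg _
      _ ≤ R * (ε' / δ) := mul_le_mul_of_nonneg_left hbound hR.le
      _ = ε / 2 := by rw [hε'def]; field_simp
      _ < ε := by linarith
  -- pointwise limit of ηk
  have hptconv : ∀ x : ℝ, 0 ≤ x → x < T → ∃ a, Tendsto (fun k => ηk k x) atTop (𝓝 a) := by
    intro x hx0 hxT
    have hx := hUC x hx0 hxT
    rw [Metric.uniformCauchySeqOn_iff] at hx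
    have hc : CauchySeq (fun k => ηk k x) := by
      rw [Metric.cauchySeq_iff]
      intro ε hε
      obtain ⟨K0, h⟩ := hx ε hε
      exact ⟨K0, fun m hm k hk => h m hm k hk x ⟨hx0, le_refl x⟩⟩
    exact cauchySeq_tendsto_of_complete hc
  set η : ℝ → EucSp J := fun x => limUnder atTop (fun k => ηk k x) with hηdef
  have hηtend : ∀ x : ℝ, 0 ≤ x → x < T → Tendsto (fun k => ηk k x) atTop (𝓝 (η x)) := by
    intro x hx0 hxT
    obtain ⟨a, ha⟩ := hptconv x hx0 hxT
    have : η x = a := ha.limUnder_eq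
    rw [this]
    exact ha
  set φ : ℝ → EucSp J := fun x => ψ x + η x with hφdef
  have hηUnif : ∀ T' : ℝ, 0 ≤ T' → T' < T →
      TendstoUniformlyOn (fun k => ηk k) η atTop (Icc (0:ℝ) T') :=
    fun T' h0 hT' => (hUC T' h0 hT').tendstoUniformlyOn_of_tendsto
      (fun x hx => hηtend x hx.1 (lt_of_le_of_lt hx.2 hT'))
  have hφUnif : ∀ T' : ℝ, 0 ≤ T' → T' < T →
      TendstoUniformlyOn (fun k => φk k) φ atTop (Icc (0:ℝ) T') := by
    intro T' h0 hT'
    have h1 : TendstoUniformlyOn (fun k x => ψk k x + ηk k x) φ atTop (Icc (0:ℝ) T') := by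
      rw [Metric.tendstoUniformlyOn_iff]
      intro ε hε
      have h2 := Metric.tendstoUniformlyOn_iff.1 (hconv T' h0) (ε/2) (by linarith)
      have h3 := Metric.tendstoUniformlyOn_iff.1 (hηUnif T' h0 hT') (ε/2) (by linarith)
      filter_upwards [h2, h3] with k hk2 hk3 x hx
      calc dist (φ x) (ψk k x + ηk k x) = dist (ψ x + η x) (ψk k x + ηk k x) := rfl
        _ ≤ dist (ψ x) (ψk k x) + dist (η x) (ηk k x) := dist_add_add_le _ _ _ _
        _ < ε/2 + ε/2 := add_lt_add (hk2 x hx) (hk3 x hx)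
        _ = ε := by ring
    refine h1.congr (Filter.Eventually.of_forall fun k x hx => ?_)
    exact (((hDP k).2.2.2.1 x hx.1 (hofR (lt_of_le_of_lt hx.2 hT'))).1).symm
  -- right continuity and left limits of η
  have hηDr : DrOn η (ENNReal.ofReal T) := by
    constructor
    · intro t ht0 htT
      rw [ENNReal.ofReal_lt_ofReal_iff hT] at htT
      rw [Metric.tendsto_nhds]
      intro ε hε
      set t' : ℝ := (t + T)/2 with ht'def
      have htt' : t < t' := by rw [ht'def]; linarith
      have ht'T : t' < T := by rw [ht'def]; linarith
      have hT'0 : 0 ≤ t' := le_trans ht0 htt'.le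
      have hunif := Metric.tendstoUniformlyOn_iff.1 (hηUnif t' hT'0 ht'T) (ε/3) (by linarith)
      obtain ⟨k, hk⟩ := hunif.exists
      have hrc := (hDP k).2.1.1 t ht0 (hofR htT)
      rw [Metric.tendsto_nhds] at hrc
      have h1 := hrc (ε/3) (by linarith)
      have h2 : Ioc t t' ∈ 𝓝[>] t := Ioc_mem_nhdsGT htt'
      filter_upwards [h1, h2] with s hs1 hs2
      have hsIcc : s ∈ Icc (0:ℝ) t' := ⟨le_trans ht0 hs2.1.le, hs2.2⟩
      have htIcc : t ∈ Icc (0:ℝ) t' := ⟨ht0, htt'.le⟩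
      calc dist (η s) (η t) ≤ dist (η s) (ηk k s) + dist (ηk k s) (ηk k t)
            + dist (ηk k t) (η t) := dist_triangle4 _ _ _ _
        _ < ε/3 + ε/3 + ε/3 := by
            refine add_lt_add (add_lt_add ?_ hs1) ?_
            · exact hk s hsIcc
            · rw [dist_comm]; exact hk t htIcc
        _ = ε := by ring
    · intro t ht0 htT
      rw [ENNReal.ofReal_lt_ofReal_iff hT] at htT
      set t' : ℝ := (t + T)/2 with ht'def
      have htt' : t < t' := by rw [ht'def]; linarith
      have ht'T : t' < T := by rw [ht'def]; linarith
      have hT'0 : 0 ≤ t' := le_trans ht0.le htt'.le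
      have hLk : ∀ k, ∃ L, Tendsto (ηk k) (𝓝[<] t) (𝓝 L) :=
        fun k => (hDP k).2.1.2 t ht0 (hofR htT)
      choose L hL using hLk
      have hLc : CauchySeq L := by
        rw [Metric.cauchySeq_iff]
        intro ε hε
        have huc := hUC t' hT'0 ht'T
        rw [Metric.uniformCauchySeqOn_iff] at huc
        obtain ⟨K0, hK0⟩ := huc (ε/2) (by linarith)
        refine ⟨K0, fun m hm k hk => ?_⟩
        have htd : Tendsto (fun s => dist (ηk m s) (ηk k s)) (𝓝[<] t)
            (𝓝 (dist (L m) (L k))) := (hL m).dist (hL k)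
        have hev : ∀ᶠ s in 𝓝[<] t, dist (ηk m s) (ηk k s) ≤ ε/2 := by
          have h2 : Ioo (0:ℝ) t ∈ 𝓝[<] t := Ioo_mem_nhdsLT ht0
          filter_upwards [h2] with s hs
          exact (hK0 m hm k hk s ⟨hs.1.le, le_trans hs.2.le htt'.le⟩).le
        have := le_of_tendsto htd hev
        linarith
      obtain ⟨L₀, hL₀⟩ := cauchySeq_tendsto_of_complete hLc
      refine ⟨L₀, ?_⟩
      rw [Metric.tendsto_nhds]
      intro ε hε
      have hunif := Metric.tendstoUniformlyOn_iff.1 (hηUnif t' hT'0 ht'T) (ε/3) (by linarith)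
      have hev2 := hunif.and ((Metric.tendsto_nhds.1 hL₀) (ε/3) (by linarith))
      obtain ⟨k, hk1, hk2⟩ := hev2.exists
      have h1 := (Metric.tendsto_nhds.1 (hL k)) (ε/3) (by linarith)
      have h2 : Ioo (0:ℝ) t ∈ 𝓝[<] t := Ioo_mem_nhdsLT ht0
      filter_upwards [h1, h2] with s hs1 hs2
      have hsIcc : s ∈ Icc (0:ℝ) t' := ⟨hs2.1.le, le_trans hs2.2.le htt'.le⟩
      calc dist (η s) L₀ ≤ dist (η s) (ηk k s) + dist (ηk k s) (L k)
            + dist (L k) L₀ := dist_triangle4 _ _ _ _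
        _ < ε/3 + ε/3 + ε/3 := add_lt_add (add_lt_add (hk1 s hsIcc) hs1) hk2
        _ = ε := by ring
  have hφDr : DrOn φ (ENNReal.ofReal T) := by
    constructor
    · intro t ht0 htT
      exact (hψDr.1 t ht0 ENNReal.ofReal_lt_top).add (hηDr.1 t ht0 htT)
    · intro t ht0 htT
      obtain ⟨L1, h1⟩ := hψDr.2 t ht0 ENNReal.ofReal_lt_top
      obtain ⟨L2, h2⟩ := hηDr.2 t ht0 htT
      exact ⟨L1 + L2, h1.add h2⟩
  have hη0span : η 0 ∈ Submodule.span ℝ (dCone n c d (Z 0)) := by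
    have hcl : IsClosed ((Submodule.span ℝ (dCone n c d (Z 0)) : Submodule ℝ (EucSp J)) :
        Set (EucSp J)) := Submodule.closed_of_finiteDimensional _
    exact hcl.mem_of_tendsto (hηtend 0 le_rfl hT)
      (Filter.Eventually.of_forall fun k => (hDP k).2.2.1)
  have hiv : ∀ t : ℝ, 0 ≤ t → ENNReal.ofReal t < ENNReal.ofReal T →
      φ t = ψ t + η t ∧ φ t ∈ Hset n c (Z t) := by
    intro t ht0 htT'
    have htT : t < T := (ENNReal.ofReal_lt_ofReal_iff hT).1 htT'
    refine ⟨rfl, ?_⟩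
    have hφtend : Tendsto (fun k => φk k t) atTop (𝓝 (φ t)) := by
      have h1 := hηtend t ht0 htT
      have h2 : Tendsto (fun k => ψk k t) atTop (𝓝 (ψ t)) :=
        (hconv t ht0).tendsto_at (Set.right_mem_Icc.2 ht0)
      have h3 := h2.add h1
      refine h3.congr (fun k => ?_)
      exact (((hDP k).2.2.2.1 t ht0 htT').1).symm
    intro i hi
    have hti : Tendsto (fun k => ⟪φk k t, n i⟫) atTop (𝓝 ⟪φ t, n i⟫) :=
      hφtend.inner tendsto_const_nhds
    have hz : ∀ k, ⟪φk k t, n i⟫ = 0 :=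
      fun k => ((hDP k).2.2.2.1 t ht0 htT').2 i hi
    have hti0 : Tendsto (fun k => ⟪φk k t, n i⟫) atTop (𝓝 (0:ℝ)) := by
      rw [tendsto_congr hz]
      exact tendsto_const_nhds
    exact tendsto_nhds_unique hti hti0
  have hv : ∀ s t : ℝ, 0 ≤ s → s < t → ENNReal.ofReal t < ENNReal.ofReal T →
      η t - η s ∈ Submodule.span ℝ (⋃ u ∈ Ioc s t, dCone n c d (Z u)) := by
    intro s t hs hst htT'
    have htT : t < T := (ENNReal.ofReal_lt_ofReal_iff hT).1 htT'
    have h1 := (hηtend t (le_trans hs hst.le) htT).sub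
      (hηtend s hs (lt_trans hst htT))
    have hcl : IsClosed ((Submodule.span ℝ (⋃ u ∈ Ioc s t, dCone n c d (Z u)) :
        Submodule ℝ (EucSp J)) : Set (EucSp J)) := Submodule.closed_of_finiteDimensional _
    exact hcl.mem_of_tendsto h1
      (Filter.Eventually.of_forall fun k => (hDP k).2.2.2.2 s t hs hst htT')
  exact ⟨φ, η, fun T' h0 hT' => ⟨hφUnif T' h0 hT', hηUnif T' h0 hT'⟩,
    hφDr, hηDr, hη0span, hiv, hv⟩
end
end

section
/- Suppose the ESP data satisfies Assumption (B). Then for each x ∈ ∂G, H_x ∩ span(d(x)) = {0}. Moreover, if x ∈ ∂G ∖ W*, then every y ∈ ℝ^J can be written uniquely as y = v + w with v ∈ H_x and w ∈ span(d(x)). -/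
open scoped RealInnerProductSpace ENNReal NNReal
open Filter Topology Set MeasureTheory

noncomputable section

namespace Statement11Aux

variable {J N : ℕ}

lemma mem_coneGen_self {s : Set (EucSp J)} {v : EucSp J} (hv : v ∈ s) : v ∈ coneGen s :=
  ⟨1, fun _ => 1, fun _ => v, fun _ => zero_le_one, fun _ => hv, by simp⟩

lemma inner_eq_zero_of_mem_span_dCone {n : Fin N → EucSp J} {c : Fin N → ℝ}
    {d : Fin N → EucSp J} {x ν w : EucSp J}
    (hνd : ∀ i ∈ ISet n c x, ⟪ν, d i⟫ = 0)
    (hw : w ∈ Submodule.span ℝ (dCone n c d x)) : ⟪ν, w⟫ = 0 := by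
  have hker : dCone n c d x ⊆ (LinearMap.ker ((innerSL ℝ ν : EucSp J →L[ℝ] ℝ) : EucSp J →ₗ[ℝ] ℝ) : Set (EucSp J)) := by
    rintro y ⟨k, r, v, hr, hv, rfl⟩
    simp only [SetLike.mem_coe, LinearMap.mem_ker, ContinuousLinearMap.coe_coe]
    have h1 : (innerSL ℝ ν) (∑ i, r i • v i) = ∑ i, r i * ⟪ν, v i⟫ := by
      simp [inner_sum, real_inner_smul_right]
    rw [h1]
    apply Finset.sum_eq_zero
    intro i _
    obtain ⟨j, hj, hje⟩ := hv i
    rw [← hje, hνd j hj, mul_zero]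
  have : w ∈ LinearMap.ker ((innerSL ℝ ν : EucSp J →L[ℝ] ℝ) : EucSp J →ₗ[ℝ] ℝ) :=
    Submodule.span_le.mpr hker hw
  simpa using this

lemma key (n d : Fin N → EucSp J) (c : Fin N → ℝ) (hB : AssumptionB n d)
    (x : EucSp J) (w : EucSp J) (hwH : w ∈ Hset n c x)
    (hwD : w ∈ Submodule.span ℝ (dCone n c d x)) : w = 0 := by
  by_contra hw0
  obtain ⟨δ, hδ, B, hBc, hBconv, hBsym, hB0, hBk⟩ := hB
  have hw' : (0:ℝ) < ‖w‖ := norm_pos_iff.mpr hw0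
  obtain ⟨ε, hε, hball⟩ := Metric.mem_nhds_iff.mp (mem_interior_iff_mem_nhds.mp hB0)
  set S : Set ℝ := {t | 0 ≤ t ∧ t • w ∈ B} with hSdef
  have hScl : IsClosed S := by
    have h : S = Ici (0:ℝ) ∩ (fun t : ℝ => t • w) ⁻¹' B := rfl
    rw [h]
    exact isClosed_Ici.inter (hBc.isClosed.preimage (continuous_id.smul continuous_const))
  have hSne : S.Nonempty := ⟨0, le_refl 0, by simpa using interior_subset hB0⟩
  obtain ⟨R, hR⟩ := isBounded_iff_forall_norm_le.mp hBc.isBounded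
  have hSbdd : BddAbove S := by
    refine ⟨R / ‖w‖, fun t ht => ?_⟩
    have h := hR _ ht.2
    rw [norm_smul, Real.norm_eq_abs, abs_of_nonneg ht.1] at h
    exact (le_div_iff₀ hw').mpr h
  set t₀ := sSup S with ht₀def
  have ht₀S : t₀ ∈ S := hScl.csSup_mem hSne hSbdd
  have ht₀pos : 0 < t₀ := by
    have h1 : ε / (2 * ‖w‖) ∈ S := by
      refine ⟨by positivity, hball ?_⟩
      rw [Metric.mem_ball, dist_zero_right, norm_smul, Real.norm_eq_abs,
        abs_of_nonneg (by positivity)]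
      have he : ε / (2 * ‖w‖) * ‖w‖ = ε / 2 := by field_simp
      rw [he]; linarith
    have h2 := le_csSup hSbdd h1
    have h3 : (0:ℝ) < ε / (2 * ‖w‖) := by positivity
    linarith
  set z := t₀ • w with hzdef
  have hzB : z ∈ B := ht₀S.2
  have hznotint : z ∉ interior B := by
    intro hzi
    obtain ⟨ε', hε', hb'⟩ := Metric.mem_nhds_iff.mp (mem_interior_iff_mem_nhds.mp hzi)
    have ht' : t₀ + ε' / (2 * ‖w‖) ∈ S := by
      constructor
      · have : (0:ℝ) < ε' / (2 * ‖w‖) := by positivity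
        linarith
      · apply hb'
        rw [Metric.mem_ball, dist_eq_norm]
        have he : (t₀ + ε' / (2 * ‖w‖)) • w - z = (ε' / (2 * ‖w‖)) • w := by
          rw [hzdef, ← sub_smul]; ring_nf
        rw [he, norm_smul, Real.norm_eq_abs, abs_of_nonneg (by positivity)]
        have he2 : ε' / (2 * ‖w‖) * ‖w‖ = ε' / 2 := by field_simp
        rw [he2]; linarith
    have h2 := le_csSup hSbdd ht'
    have h3 : (0:ℝ) < ε' / (2 * ‖w‖) := by positivity
    linarith
  have hzfr : z ∈ frontier B := by
    rw [hBc.isClosed.frontier_eq]; exact ⟨hzB, hznotint⟩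
  obtain ⟨f, hf⟩ := geometric_hahn_banach_open_point hBconv.interior isOpen_interior hznotint
  have hfz : ∀ y ∈ B, f y ≤ f z := by
    intro y hy
    have htend : Filter.Tendsto (fun b : ℝ => f (b • y)) (nhdsWithin 1 (Set.Iio 1)) (nhds (f y)) := by
      have h : Filter.Tendsto (fun b : ℝ => f (b • y)) (nhds (1:ℝ)) (nhds (f ((1:ℝ) • y))) :=
        (f.continuous.comp (continuous_id.smul continuous_const)).tendsto 1
      simpa using h.mono_left nhdsWithin_le_nhds
    refine le_of_tendsto htend ?_
    filter_upwards [Ioo_mem_nhdsLT_of_mem (a := (0:ℝ)) ⟨zero_lt_one, le_refl (1:ℝ)⟩] with b hb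
    refine le_of_lt (hf _ ?_)
    have h := hBconv.combo_interior_closure_mem_interior hB0 (subset_closure hy)
      (a := 1 - b) (b := b) (by linarith [hb.2]) (le_of_lt hb.1) (by ring)
    simpa using h
  have hfzpos : 0 < f z := by
    have h := hf 0 hB0; simpa using h
  set v := (InnerProductSpace.toDual ℝ (EucSp J)).symm f with hvdef
  have hv : ∀ y, ⟪v, y⟫ = f y := fun y => InnerProductSpace.toDual_symm_apply
  have hvne : v ≠ 0 := by
    intro h
    have h2 := hv z
    rw [h, inner_zero_left] at h2
    linarith
  set ν := -(‖v‖⁻¹ • v) with hνdef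
  have hν1 : ‖ν‖ = 1 := by
    rw [hνdef, norm_neg, norm_smul, norm_inv, norm_norm,
      inv_mul_cancel₀ (norm_ne_zero_iff.mpr hvne)]
  have hνinner : ∀ y, ⟪ν, y⟫ = -(‖v‖⁻¹ * f y) := by
    intro y; rw [hνdef, inner_neg_left, real_inner_smul_left, hv]
  have hνB : ∀ y ∈ B, 0 ≤ ⟪ν, y - z⟫ := by
    intro y hy
    rw [inner_sub_right, hνinner, hνinner]
    have h1 := hfz y hy
    have h2 : (0:ℝ) ≤ ‖v‖⁻¹ := by positivity
    nlinarith
  have hνd : ∀ i ∈ ISet n c x, ⟪ν, d i⟫ = 0 := by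
    intro i hi
    refine hBk i z hzfr ?_ ν hν1 hνB
    have h : ⟪z, n i⟫ = 0 := by
      rw [hzdef, real_inner_smul_left, hwH i hi, mul_zero]
    rw [h, abs_zero]; exact hδ
  have h0 : ⟪ν, w⟫ = 0 := inner_eq_zero_of_mem_span_dCone hνd hwD
  have hyB : (-(ε/2)) • ν ∈ B := by
    apply hball
    rw [Metric.mem_ball, dist_zero_right, norm_smul, hν1, mul_one, Real.norm_eq_abs,
      abs_neg, abs_of_nonneg (by positivity)]
    linarith
  have hge := hνB _ hyB
  rw [inner_sub_right, real_inner_smul_right, real_inner_self_eq_norm_sq, hν1] at hge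
  have hνz : ⟪ν, z⟫ < 0 := by nlinarith
  have heq : ⟪ν, z⟫ = t₀ * ⟪ν, w⟫ := by rw [hzdef, real_inner_smul_right]
  rw [heq, h0, mul_zero] at hνz
  exact lt_irrefl _ hνz

/-- `Hset` as a submodule. -/
def HsubM (n : Fin N → EucSp J) (c : Fin N → ℝ) (x : EucSp J) : Submodule ℝ (EucSp J) where
  carrier := Hset n c x
  add_mem' := fun ha hb i hi => by rw [inner_add_left, ha i hi, hb i hi, add_zero]
  zero_mem' := fun i _ => inner_zero_left _
  smul_mem' := fun r a ha i hi => by rw [real_inner_smul_left, ha i hi, mul_zero]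

lemma exists_active {n : Fin N → EucSp J} {c : Fin N → ℝ} {x : EucSp J}
    (hx : x ∈ frontier (Gset n c)) : ∃ i, ⟪x, n i⟫ = c i := by
  have hGcl : IsClosed (Gset n c) := by
    have h : Gset n c = ⋂ i, (fun y : EucSp J => ⟪y, n i⟫) ⁻¹' Ici (c i) := by
      ext y; simp [Gset, Set.mem_iInter]
    rw [h]
    exact isClosed_iInter fun i => isClosed_Ici.preimage (Continuous.inner continuous_id continuous_const)
  have hxG : x ∈ Gset n c := by
    rw [hGcl.frontier_eq] at hx; exact hx.1
  by_contra h
  push_neg at h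
  have hlt : ∀ i, c i < ⟪x, n i⟫ := fun i => lt_of_le_of_ne (hxG i) (fun e => h i e.symm)
  have hint : x ∈ interior (Gset n c) := by
    apply mem_interior.mpr
    refine ⟨⋂ i, (fun y : EucSp J => ⟪y, n i⟫) ⁻¹' Ioi (c i), ?_, ?_, ?_⟩
    · intro y hy i; exact le_of_lt (Set.mem_iInter.mp hy i)
    · exact isOpen_iInter_of_finite fun i =>
        isOpen_Ioi.preimage (Continuous.inner continuous_id continuous_const)
    · exact Set.mem_iInter.mpr hlt
  rw [hGcl.frontier_eq] at hx; exact hx.2 hint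

end Statement11Aux

/-- **Lemma (decomposition at points of the boundary).**
Under Assumption (B): for each `x ∈ ∂G`, `H_x ∩ span(d(x)) = {0}`; and for `x ∈ ∂G \ W*`
every `y` decomposes uniquely as `y = v + w` with `v ∈ H_x` and `w ∈ span(d(x))`. -/
theorem statement11 (J N : ℕ) (hJ : 1 ≤ J) (hN : 1 ≤ N)
    (n d : Fin N → EucSp J) (c : Fin N → ℝ)
    (hn : ∀ i, ‖n i‖ = 1) (hdn : ∀ i, ⟪d i, n i⟫ = 1)
    (hGne : (Gset n c).Nonempty)
    (hB : AssumptionB n d) :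
    (∀ x ∈ frontier (Gset n c),
      Hset n c x ∩ (Submodule.span ℝ (dCone n c d x) : Set (EucSp J)) = {0}) ∧
    (∀ x ∈ frontier (Gset n c), x ∉ Wstar n c d → ∀ y : EucSp J,
      ∃! p : EucSp J × EucSp J,
        p.1 ∈ Hset n c x ∧ p.2 ∈ Submodule.span ℝ (dCone n c d x) ∧ y = p.1 + p.2) := by
  open Statement11Aux in
  constructor
  · intro x hx
    ext w
    simp only [Set.mem_inter_iff, Set.mem_singleton_iff, SetLike.mem_coe]
    constructor
    · rintro ⟨h1, h2⟩
      exact key n d c hB x w h1 h2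
    · rintro rfl
      exact ⟨fun i _ => inner_zero_left _, Submodule.zero_mem _⟩
  · intro x hx hxW y
    set Hs := Statement11Aux.HsubM n c x with hHs
    set D := Submodule.span ℝ (dCone n c d x) with hD
    have hsup : Hs ⊔ D = ⊤ := by
      by_cases hN2 : 2 ≤ (ISet n c x).ncard
      · have hxN : x ∈ Nstar n c := ⟨hx, hN2⟩
        have hspan : Submodule.span ℝ (Hset n c x ∪ dCone n c d x) = ⊤ := by
          by_contra hne
          exact hxW ⟨hxN, hne⟩
        rw [eq_top_iff, ← hspan]
        apply Submodule.span_le.mpr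
        rintro u (hu | hu)
        · exact Submodule.mem_sup_left (show u ∈ Hs from hu)
        · exact Submodule.mem_sup_right (Submodule.subset_span hu)
      · obtain ⟨i₀, hi₀⟩ := exists_active hx
        have hi₀I : i₀ ∈ ISet n c x := hi₀
        have hone : (ISet n c x).ncard = 1 := by
          have hfin : (ISet n c x).Finite := Set.toFinite _
          have h1 : 0 < (ISet n c x).ncard :=
            (Set.ncard_pos hfin).mpr ⟨i₀, hi₀I⟩
          omega
        obtain ⟨a, ha⟩ := Set.ncard_eq_one.mp hone
        have haI : a ∈ ISet n c x := by rw [ha]; rfl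
        have hi₀a : i₀ = a := by
          have := hi₀I
          rw [ha] at this
          exact this
        rw [eq_top_iff]
        intro u _
        have hda : d a ∈ dCone n c d x :=
          mem_coneGen_self ⟨a, haI, rfl⟩
        have hv : u - ⟪u, n a⟫ • d a ∈ Hs := by
          intro i hi
          have hia : i = a := by rw [ha] at hi; exact hi
          rw [hia, inner_sub_left, real_inner_smul_left, hdn a, mul_one, sub_self]
        have hw : ⟪u, n a⟫ • d a ∈ D :=
          Submodule.smul_mem _ _ (Submodule.subset_span hda)
        have : u = (u - ⟪u, n a⟫ • d a) + ⟪u, n a⟫ • d a := by abel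
        rw [this]
        exact Submodule.add_mem _ (Submodule.mem_sup_left hv) (Submodule.mem_sup_right hw)
    have hy : y ∈ Hs ⊔ D := by rw [hsup]; trivial
    obtain ⟨v, hv, w, hw, hvw⟩ := Submodule.mem_sup.mp hy
    refine ⟨(v, w), ⟨hv, hw, hvw.symm⟩, ?_⟩
    rintro ⟨v', w'⟩ ⟨h1, h2, h3⟩
    have hsub : v' - v = w - w' := by
      have : v + w = v' + w' := by rw [hvw]; exact h3
      have h := this
      apply eq_sub_of_add_eq
      rw [sub_add_eq_add_sub]
      rw [← h]
      abel
    have hmemH : v' - v ∈ Hset n c x := Submodule.sub_mem Hs h1 hv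
    have hmemD : v' - v ∈ D := by
      rw [hsub]; exact Submodule.sub_mem D hw h2
    have hz : v' - v = 0 := key n d c hB x _ hmemH hmemD
    have hv'v : v' = v := by
      have := sub_eq_zero.mp hz; exact this
    have hw'w : w' = w := by
      have h4 : w - w' = 0 := by rw [← hsub, hz]
      have := sub_eq_zero.mp h4
      exact this.symm
    exact Prod.ext hv'v hw'w
end
end

section
/- Suppose the ESP data satisfies Assumption (B) and that {d_i : i ∈ I(x)} is linearly independent for every x ∈ ∂G. Then W* = ∅; that is, span(H_x ∪ d(x)) = ℝ^J for every x ∈ N*. -/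
open scoped RealInnerProductSpace ENNReal NNReal
open Filter Topology Set MeasureTheory

noncomputable section

set_option maxHeartbeats 1000000 in
/-- **Lemma (`W*` is empty under linear independence).**
Under Assumption (B) and linear independence of `{dᵢ : i ∈ I(x)}` for every `x ∈ ∂G`,
the set `W*` is empty. -/
theorem statement12 (J N : ℕ) (hJ : 1 ≤ J) (hN : 1 ≤ N)
    (n d : Fin N → EucSp J) (c : Fin N → ℝ)
    (hn : ∀ i, ‖n i‖ = 1) (hdn : ∀ i, ⟪d i, n i⟫ = 1)
    (hGne : (Gset n c).Nonempty)
    (hB : AssumptionB n d)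
    (hLI : ∀ x ∈ frontier (Gset n c),
      LinearIndependent ℝ (fun i : ISet n c x => d i.1)) :
    Wstar n c d = (∅ : Set (EucSp J)) := by
  ext x
  simp only [Set.mem_empty_iff_false, iff_false]
  intro hxW
  obtain ⟨⟨hxfront, -⟩, hspan⟩ := hxW
  classical
  haveI : Fintype ↥(ISet n c x) := Fintype.ofFinite _
  set I : Set (Fin N) := ISet n c x with hI
  set Nspan : Submodule ℝ (EucSp J) := Submodule.span ℝ (n '' I) with hNspan
  set Dspan : Submodule ℝ (EucSp J) := Submodule.span ℝ (d '' I) with hDspan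
  -- `Nspanᗮ ⊔ Dspan` is not everything
  have hsub_le : Nspanᗮ ≤ Submodule.span ℝ (Hset n c x ∪ dCone n c d x) := by
    intro y hy
    apply Submodule.subset_span
    left
    intro i hi
    have h0 : ⟪n i, y⟫ = 0 :=
      (Submodule.mem_orthogonal Nspan y).1 hy (n i) (Submodule.subset_span ⟨i, hi, rfl⟩)
    rw [real_inner_comm]; exact h0
  have hD_le : Dspan ≤ Submodule.span ℝ (Hset n c x ∪ dCone n c d x) := by
    apply Submodule.span_le.2
    rintro y ⟨i, hi, rfl⟩
    apply Submodule.subset_span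
    right
    exact ⟨1, fun _ => 1, fun _ => d i, fun _ => zero_le_one, fun _ => ⟨i, hi, rfl⟩,
      by simp [Fin.sum_univ_one]⟩
  have hsup_ne : Nspanᗮ ⊔ Dspan ≠ ⊤ := by
    intro h
    exact hspan (eq_top_iff.2 (h ▸ sup_le hsub_le hD_le))
  -- dimension counting: there is a nonzero `w` in `Nspanᗮ ⊓ Dspan`
  have hDrank : Module.finrank ℝ Dspan = Fintype.card ↥I := by
    have hli := hLI x hxfront
    have := finrank_span_eq_card (R := ℝ) hli
    rw [hDspan, Set.image_eq_range d I]
    exact this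
  have hNrank : Module.finrank ℝ Nspan ≤ Fintype.card ↥I := by
    have := finrank_range_le_card (R := ℝ) (fun i : ↥I => n i.1)
    rw [Set.finrank] at this
    rw [hNspan, Set.image_eq_range n I]
    exact this
  have hNperp : Module.finrank ℝ Nspan + Module.finrank ℝ Nspanᗮ = J := by
    have := Submodule.finrank_add_finrank_orthogonal (K := Nspan)
    rwa [finrank_euclideanSpace_fin] at this
  have hne_bot : Nspanᗮ ⊓ Dspan ≠ ⊥ := by
    intro hbot
    apply hsup_ne
    apply Submodule.eq_top_of_finrank_eq
    have hsum := Submodule.finrank_sup_add_finrank_inf_eq Nspanᗮ Dspan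
    rw [hbot, finrank_bot] at hsum
    have hle : Module.finrank ℝ ↥(Nspanᗮ ⊔ Dspan) ≤ J := by
      have := Submodule.finrank_le (Nspanᗮ ⊔ Dspan)
      rwa [finrank_euclideanSpace_fin] at this
    rw [finrank_euclideanSpace_fin]
    omega
  obtain ⟨w, hw, hwne⟩ := (Submodule.ne_bot_iff _).1 hne_bot
  obtain ⟨hwH, hwD⟩ := Submodule.mem_inf.1 hw
  have hwn : ∀ i ∈ I, ⟪w, n i⟫ = 0 := fun i hi => by
    rw [real_inner_comm]
    exact (Submodule.mem_orthogonal Nspan w).1 hwH (n i) (Submodule.subset_span ⟨i, hi, rfl⟩)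
  have hwnorm : (0:ℝ) < ‖w‖ := norm_pos_iff.2 hwne
  -- Assumption (B) data
  obtain ⟨δ, hδ, B, hBcomp, hBconv, hBsymm, hB0, hBmain⟩ := hB
  have hB0B : (0 : EucSp J) ∈ B := interior_subset hB0
  -- scale w to the boundary of B
  set S : Set ℝ := {t : ℝ | 0 ≤ t ∧ t • w ∈ B} with hS
  have hS0 : (0:ℝ) ∈ S := ⟨le_refl 0, by simpa using hB0B⟩
  have hSclosed : IsClosed S := by
    have : S = Set.Ici (0:ℝ) ∩ (fun t : ℝ => t • w) ⁻¹' B := rfl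
    rw [this]
    exact isClosed_Ici.inter (hBcomp.isClosed.preimage (continuous_id.smul continuous_const))
  obtain ⟨M, hM⟩ := hBcomp.isBounded.exists_norm_le
  have hSbdd : BddAbove S := by
    refine ⟨M / ‖w‖, fun t ht => ?_⟩
    have h1 : ‖t • w‖ ≤ M := hM _ ht.2
    rw [norm_smul, Real.norm_eq_abs, abs_of_nonneg ht.1] at h1
    rw [le_div_iff₀ hwnorm]
    exact h1
  set t₀ : ℝ := sSup S with ht₀
  have ht₀S : t₀ ∈ S := hSclosed.csSup_mem ⟨0, hS0⟩ hSbdd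
  set z : EucSp J := t₀ • w with hz
  have hzB : z ∈ B := ht₀S.2
  have hznotint : z ∉ interior B := by
    intro hzi
    obtain ⟨ε, hε, hball⟩ := Metric.isOpen_iff.1 isOpen_interior z hzi
    set t₁ : ℝ := t₀ + ε / (2 * ‖w‖) with ht₁
    have hq : 0 < ε / (2 * ‖w‖) := div_pos hε (by linarith)
    have ht₁gt : t₀ < t₁ := by
      rw [ht₁]
      exact lt_add_of_pos_right t₀ hq
    have ht₁S : t₁ ∈ S := by
      refine ⟨le_trans ht₀S.1 ht₁gt.le, interior_subset (hball ?_)⟩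
      rw [Metric.mem_ball, dist_eq_norm]
      have : t₁ • w - z = (ε / (2 * ‖w‖)) • w := by
        rw [hz, ht₁, add_smul]; abel
      rw [this, norm_smul, Real.norm_eq_abs,
        abs_of_nonneg (le_of_lt (div_pos hε (by linarith)))]
      rw [div_mul_eq_mul_div, mul_comm]
      rw [div_lt_iff₀ (by linarith : (0:ℝ) < 2 * ‖w‖)]
      nlinarith
    exact absurd (le_csSup hSbdd ht₁S) (not_le.2 ht₁gt)
  have hzfront : z ∈ frontier B := by
    rw [hBcomp.isClosed.frontier_eq]
    exact ⟨hzB, hznotint⟩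
  have hzn : ∀ i ∈ I, ⟪z, n i⟫ = 0 := fun i hi => by
    rw [hz, real_inner_smul_left, hwn i hi, mul_zero]
  -- separating functional
  obtain ⟨f, hf⟩ := geometric_hahn_banach_open_point (hBconv.interior) isOpen_interior hznotint
  have hfz : (0:ℝ) < f z := by
    have := hf 0 hB0
    simpa using this
  have hfle : ∀ y ∈ B, f y ≤ f z := by
    intro y hy
    by_contra hcon
    push_neg at hcon
    have hfy : (0:ℝ) < f y := hfz.trans hcon
    set b : ℝ := (f z / f y + 1) / 2 with hb
    have hq1 : f z / f y < 1 := (div_lt_one hfy).2 hcon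
    have hq0 : 0 < f z / f y := div_pos hfz hfy
    have hb0 : 0 < b := by rw [hb]; linarith
    have hb1 : b < 1 := by rw [hb]; linarith
    have hbq : f z / f y < b := by rw [hb]; linarith
    have hmem : b • y ∈ interior B := by
      have := hBconv.combo_interior_closure_mem_interior hB0 (subset_closure hy)
        (by linarith : (0:ℝ) < 1 - b) hb0.le (by ring)
      simpa using this
    have hlt := hf _ hmem
    rw [_root_.map_smul, smul_eq_mul] at hlt
    have : f z < b * f y := by
      have := (div_lt_iff₀ hfy).1 hbq
      linarith
    linarith
  set ν₀ : EucSp J := (InnerProductSpace.toDual ℝ (EucSp J)).symm f with hν₀def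
  have hν₀ : ∀ y : EucSp J, ⟪ν₀, y⟫ = f y := fun y => InnerProductSpace.toDual_symm_apply
  have hν₀ne : ν₀ ≠ 0 := by
    intro h
    have := hν₀ z
    rw [h, inner_zero_left] at this
    linarith
  have hν₀norm : (0:ℝ) < ‖ν₀‖ := norm_pos_iff.2 hν₀ne
  set ν : EucSp J := -(‖ν₀‖⁻¹ • ν₀) with hνdef
  have hνnorm : ‖ν‖ = 1 := by
    rw [hνdef, norm_neg, norm_smul, norm_inv, norm_norm]
    field_simp
  have hνinner : ∀ y : EucSp J, ⟪ν, y⟫ = -(‖ν₀‖⁻¹ * f y) := by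
    intro y
    rw [hνdef, inner_neg_left, real_inner_smul_left, hν₀]
  have hνnormal : ∀ y ∈ B, 0 ≤ ⟪ν, y - z⟫ := by
    intro y hy
    rw [hνinner, map_sub]
    have h1 : f y - f z ≤ 0 := by linarith [hfle y hy]
    have h2 : ‖ν₀‖⁻¹ * (f y - f z) ≤ 0 :=
      mul_nonpos_of_nonneg_of_nonpos (inv_nonneg.2 hν₀norm.le) h1
    linarith
  have hνd : ∀ i ∈ I, f (d i) = 0 := by
    intro i hi
    have habs : |⟪z, n i⟫| < δ := by
      rw [hzn i hi, abs_zero]; exact hδ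
    have h0 := hBmain i z hzfront habs ν hνnorm hνnormal
    rw [hνinner] at h0
    have : ‖ν₀‖⁻¹ * f (d i) = 0 := by linarith
    have hne : ‖ν₀‖⁻¹ ≠ 0 := inv_ne_zero (ne_of_gt hν₀norm)
    exact (mul_eq_zero.1 this).resolve_left hne
  have hfw : f w = 0 := by
    have hker : Dspan ≤ LinearMap.ker (f : EucSp J →ₗ[ℝ] ℝ) := by
      apply Submodule.span_le.2
      rintro y ⟨i, hi, rfl⟩
      exact LinearMap.mem_ker.2 (hνd i hi)
    exact LinearMap.mem_ker.1 (hker hwD)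
  have : f z = 0 := by
    rw [hz, _root_.map_smul, smul_eq_mul, hfw, mul_zero]
  linarith
end
end

section
/- Suppose the ESP data satisfies Assumption (B) and fix δ > 0 and a set B as in Assumption (B). Then for each x ∈ ∂G ∖ W* there exists a unique map L_x : ℝ^J → ℝ^J such that for every y ∈ ℝ^J, L_x y ∈ H_x and L_x y − y ∈ span(d(x)); moreover L_x is linear and satisfies ‖L_x y‖_B ≤ ‖y‖_B for all y ∈ ℝ^J, i.e., L_x is a contraction with respect to the gauge of B and maps B into B ∩ H_x. -/
open scoped RealInnerProductSpace ENNReal NNReal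
open Filter Topology Set MeasureTheory

noncomputable section

/-- Supporting hyperplane: every frontier point of a convex body with `0` in its interior
admits a unit inward normal. -/
lemma exists_unit_inward_normal {J : ℕ} {B : Set (EucSp J)} (hBconvex : Convex ℝ B)
    (hB0 : (0 : EucSp J) ∈ interior B) {w : EucSp J} (hw : w ∈ frontier B) :
    ∃ ν : EucSp J, ‖ν‖ = 1 ∧ ∀ b ∈ B, 0 ≤ ⟪ν, b - w⟫ := by
  have hwint : w ∉ interior B := hw.2
  obtain ⟨f, hf⟩ :=
    geometric_hahn_banach_open_point hBconvex.interior isOpen_interior hwint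
  have hfw : 0 < f w := by simpa using hf 0 hB0
  have hfB : ∀ b ∈ B, f b ≤ f w := by
    intro b hb
    by_contra hlt
    push_neg at hlt
    have hfb : 0 < f b := hfw.trans hlt
    set t : ℝ := (f w / f b + 1) / 2 with ht
    have h1 : f w / f b < 1 := (div_lt_one hfb).2 hlt
    have h0 : 0 < f w / f b := div_pos hfw hfb
    have ht1 : t < 1 := by rw [ht]; linarith
    have htgt : f w / f b < t := by rw [ht]; linarith
    have hmem : t • b ∈ interior B := by
      have := hBconvex.combo_interior_self_mem_interior hB0 hb
        (by linarith : (0:ℝ) < 1 - t) (by linarith : (0:ℝ) ≤ t) (by ring)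
      simpa using this
    have hlt2 : t * f b < f w := by
      have := hf _ hmem
      rwa [ContinuousLinearMap.map_smul, smul_eq_mul] at this
    have : f w < t * f b := (div_lt_iff₀ hfb).1 htgt
    linarith
  set z := (InnerProductSpace.toDual ℝ (EucSp J)).symm f with hzdef
  have hz : ∀ y : EucSp J, ⟪z, y⟫ = f y := fun y => InnerProductSpace.toDual_symm_apply
  have hzne : z ≠ 0 := by
    intro h0
    rw [← hz w, h0] at hfw
    simp at hfw
  refine ⟨-(‖z‖⁻¹ • z), ?_, ?_⟩
  · rw [norm_neg, norm_smul, norm_inv, norm_norm, inv_mul_cancel₀ (norm_ne_zero_iff.2 hzne)]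
  · intro b hb
    rw [inner_neg_left, real_inner_smul_left, inner_sub_right, hz, hz]
    have h1 : f b - f w ≤ 0 := sub_nonpos.2 (hfB b hb)
    have h2 : (0:ℝ) ≤ ‖z‖⁻¹ := inv_nonneg.2 (norm_nonneg z)
    nlinarith

/-- An inward normal is strictly positive against interior points. -/
lemma inward_normal_pos_at_interior {J : ℕ} {B : Set (EucSp J)} {ν w b₀ : EucSp J}
    (hν : ‖ν‖ = 1) (hsupp : ∀ b ∈ B, 0 ≤ ⟪ν, b - w⟫) (hb₀ : b₀ ∈ interior B) :
    0 < ⟪ν, b₀ - w⟫ := by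
  obtain ⟨ε, hε, hball⟩ := Metric.isOpen_iff.1 isOpen_interior b₀ hb₀
  have hmem : b₀ - (ε/2) • ν ∈ B := by
    apply interior_subset
    apply hball
    rw [Metric.mem_ball, dist_eq_norm]
    have : b₀ - (ε/2) • ν - b₀ = -((ε/2) • ν) := by abel
    rw [this, norm_neg, norm_smul, hν, mul_one, Real.norm_eq_abs, abs_of_pos (by linarith)]
    linarith
  have h1 := hsupp _ hmem
  have h2 : b₀ - (ε/2) • ν - w = (b₀ - w) - (ε/2) • ν := by abel
  rw [h2, inner_sub_right, real_inner_smul_right, real_inner_self_eq_norm_mul_norm, hν] at h1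
  nlinarith

/-- Key geometric contradiction lemma from Assumption (B). -/
lemma key_contraction {J N : ℕ} {n d : Fin N → EucSp J} {c : Fin N → ℝ} {δ : ℝ} (hδ : 0 < δ)
    {B : Set (EucSp J)} (hBconvex : Convex ℝ B) (hB0 : (0 : EucSp J) ∈ interior B)
    (hBgeom : ∀ i : Fin N, ∀ z ∈ frontier B, |⟪z, n i⟫| < δ →
      ∀ ν : EucSp J, ‖ν‖ = 1 → (∀ y ∈ B, 0 ≤ ⟪ν, y - z⟫) → ⟪ν, d i⟫ = 0)
    (x : EucSp J) {p q : EucSp J} (hp : p ∈ Hset n c x)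
    (hpq : p - q ∈ Submodule.span ℝ (dCone n c d x))
    (hlt : gauge B q < gauge B p) : False := by
  have hBnhds : B ∈ 𝓝 (0 : EucSp J) := mem_interior_iff_mem_nhds.1 hB0
  set g := gauge B p with hgdef
  have hg : 0 < g := (gauge_nonneg q).trans_lt hlt
  set w := g⁻¹ • p with hw
  have hgw : gauge B w = 1 := by
    rw [hw, gauge_smul_of_nonneg (inv_nonneg.2 hg.le), smul_eq_mul, inv_mul_cancel₀ hg.ne']
  have hwf : w ∈ frontier B := (gauge_eq_one_iff_mem_frontier hBconvex hBnhds).1 hgw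
  obtain ⟨ν, hν1, hνsupp⟩ := exists_unit_inward_normal hBconvex hB0 hwf
  have hνd : ∀ i ∈ ISet n c x, ⟪ν, d i⟫ = 0 := by
    intro i hi
    refine hBgeom i w hwf ?_ ν hν1 hνsupp
    have hwi : ⟪w, n i⟫ = 0 := by
      rw [hw, real_inner_smul_left, hp i hi, mul_zero]
    rw [hwi]; simpa using hδ
  have hνspan : ∀ u ∈ Submodule.span ℝ (dCone n c d x), ⟪ν, u⟫ = 0 := by
    have hle : Submodule.span ℝ (dCone n c d x) ≤ LinearMap.ker (innerSL ℝ ν : EucSp J →ₗ[ℝ] ℝ) := by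
      rw [Submodule.span_le]
      rintro u ⟨k, r, v, hr, hv, rfl⟩
      simp only [SetLike.mem_coe, LinearMap.mem_ker]
      show ⟪ν, ∑ i, r i • v i⟫ = 0
      rw [inner_sum]
      refine Finset.sum_eq_zero fun i _ => ?_
      rw [real_inner_smul_right]
      obtain ⟨j, hj, hjv⟩ := hv i
      rw [← hjv, hνd j hj, mul_zero]
    intro u hu
    have := hle hu
    simpa [LinearMap.mem_ker] using this
  have hνpq : ⟪ν, p - q⟫ = 0 := hνspan _ hpq
  have hb₀ : g⁻¹ • q ∈ interior B := by
    rw [← gauge_lt_one_iff_mem_interior hBconvex hBnhds,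
      gauge_smul_of_nonneg (inv_nonneg.2 hg.le), smul_eq_mul]
    calc g⁻¹ * gauge B q < g⁻¹ * g := by
          exact mul_lt_mul_of_pos_left hlt (inv_pos.2 hg)
      _ = 1 := inv_mul_cancel₀ hg.ne'
  have hpos := inward_normal_pos_at_interior hν1 hνsupp hb₀
  have hzero : ⟪ν, g⁻¹ • q - w⟫ = 0 := by
    rw [hw, ← smul_sub, real_inner_smul_right]
    have hqp : ⟪ν, q - p⟫ = 0 := by
      rw [← neg_sub p q, inner_neg_right, hνpq, neg_zero]
    rw [hqp, mul_zero]
  rw [hzero] at hpos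
  exact lt_irrefl _ hpos

/-- **Lemma (derivative projection operators).**
Fix `δ > 0` and a set `B` as in Assumption (B).  For each `x ∈ ∂G \ W*` there is a unique map
`L_x` with `L_x y ∈ H_x` and `L_x y − y ∈ span(d(x))` for every `y`; any such map is linear,
is a contraction for the gauge of `B`, and maps `B` into `B ∩ H_x`. -/
theorem statement13 (J N : ℕ) (hJ : 1 ≤ J) (hN : 1 ≤ N)
    (n d : Fin N → EucSp J) (c : Fin N → ℝ)
    (hn : ∀ i, ‖n i‖ = 1) (hdn : ∀ i, ⟪d i, n i⟫ = 1)
    (hGne : (Gset n c).Nonempty)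
    (δ : ℝ) (hδ : 0 < δ) (B : Set (EucSp J))
    (hBcompact : IsCompact B) (hBconvex : Convex ℝ B) (hBsymm : ∀ z ∈ B, -z ∈ B)
    (hB0 : (0 : EucSp J) ∈ interior B)
    (hBgeom : ∀ i : Fin N, ∀ z ∈ frontier B, |⟪z, n i⟫| < δ →
      ∀ ν : EucSp J, ‖ν‖ = 1 → (∀ y ∈ B, 0 ≤ ⟪ν, y - z⟫) → ⟪ν, d i⟫ = 0) :
    ∀ x ∈ frontier (Gset n c), x ∉ Wstar n c d →
      (∃! L : EucSp J → EucSp J,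
        ∀ y : EucSp J, L y ∈ Hset n c x ∧ L y - y ∈ Submodule.span ℝ (dCone n c d x)) ∧
      (∀ L : EucSp J → EucSp J,
        (∀ y : EucSp J, L y ∈ Hset n c x ∧ L y - y ∈ Submodule.span ℝ (dCone n c d x)) →
        IsLinearMap ℝ L ∧
        (∀ y : EucSp J, gauge B (L y) ≤ gauge B y) ∧
        (∀ y ∈ B, L y ∈ B ∩ Hset n c x)) := by
  intro x hx hW
  have hBnhds : B ∈ 𝓝 (0 : EucSp J) := mem_interior_iff_mem_nhds.1 hB0
  -- G is closed
  have hGclosed : IsClosed (Gset n c) := by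
    have hG : Gset n c = ⋂ i, {y : EucSp J | c i ≤ ⟪y, n i⟫} := by
      ext y; simp [Gset]
    rw [hG]
    exact isClosed_iInter fun i =>
      isClosed_le continuous_const (continuous_id.inner continuous_const)
  -- the active set is nonempty
  have hxfr : x ∈ closure (Gset n c) \ interior (Gset n c) := hx
  have hxG : x ∈ Gset n c := by
    have := hxfr.1
    rwa [hGclosed.closure_eq] at this
  have hIne : (ISet n c x).Nonempty := by
    by_contra hempty
    rw [Set.not_nonempty_iff_eq_empty] at hempty
    have hstrict : ∀ i, c i < ⟪x, n i⟫ := by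
      intro i
      refine lt_of_le_of_ne (hxG i) fun h => ?_
      have : i ∈ ISet n c x := h.symm
      rw [hempty] at this
      exact this
    have hopen : IsOpen {y : EucSp J | ∀ i, c i < ⟪y, n i⟫} := by
      have : {y : EucSp J | ∀ i, c i < ⟪y, n i⟫} = ⋂ i, {y | c i < ⟪y, n i⟫} := by
        ext y; simp
      rw [this]
      exact isOpen_iInter_of_finite fun i =>
        isOpen_lt continuous_const (continuous_id.inner continuous_const)
    have hxint : x ∈ interior (Gset n c) :=
      mem_interior.2 ⟨{y : EucSp J | ∀ i, c i < ⟪y, n i⟫},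
        fun y hy i => le_of_lt (hy i), hopen, hstrict⟩
    exact hxfr.2 hxint
  -- the submodules H' and D'
  set H' : Submodule ℝ (EucSp J) := ⨅ i ∈ ISet n c x, LinearMap.ker (innerSL ℝ (n i) : EucSp J →ₗ[ℝ] ℝ)
    with hH'def
  set D' : Submodule ℝ (EucSp J) := Submodule.span ℝ (dCone n c d x) with hD'def
  have hH' : ∀ y : EucSp J, y ∈ H' ↔ y ∈ Hset n c x := by
    intro y
    simp only [hH'def, Submodule.mem_iInf, LinearMap.mem_ker, ContinuousLinearMap.coe_coe, innerSL_apply_apply, Hset,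
      Set.mem_setOf_eq]
    constructor
    · intro h i hi; rw [real_inner_comm]; exact h i hi
    · intro h i hi; rw [real_inner_comm]; exact h i hi
  -- disjointness via Assumption (B)
  have hdisj : ∀ v : EucSp J, v ∈ H' → v ∈ D' → v = 0 := by
    intro v hvH hvD
    by_contra hv0
    have hb : Bornology.IsVonNBounded ℝ B :=
      NormedSpace.isVonNBounded_of_isBounded ℝ hBcompact.isBounded
    have habs : Absorbent ℝ B := absorbent_nhds_zero hBnhds
    have hgv : gauge B (0 : EucSp J) < gauge B v := by
      rw [gauge_zero]
      exact (gauge_pos habs hb).2 hv0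
    exact key_contraction hδ hBconvex hB0 hBgeom x ((hH' v).1 hvH)
      (by simpa using hvD) hgv
  -- the sum is everything
  have hsup : H' ⊔ D' = ⊤ := by
    rcases Nat.lt_or_ge (ISet n c x).ncard 2 with hlt2 | hge2
    · -- exactly one active constraint
      have hpos : 0 < (ISet n c x).ncard := (Set.ncard_pos (Set.toFinite _)).2 hIne
      have h1 : (ISet n c x).ncard = 1 := by omega
      obtain ⟨i₀, hi₀⟩ := Set.ncard_eq_one.1 h1
      rw [eq_top_iff]
      rintro y -
      rw [Submodule.mem_sup]
      refine ⟨y - ⟪y, n i₀⟫ • d i₀, ?_, ⟪y, n i₀⟫ • d i₀, ?_, by abel⟩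
      · rw [hH']
        intro i hi
        rw [hi₀] at hi
        rw [Set.mem_singleton_iff] at hi
        rw [hi, inner_sub_left, real_inner_smul_left, hdn i₀, mul_one, sub_self]
      · apply Submodule.smul_mem
        apply Submodule.subset_span
        have hi₀mem : i₀ ∈ ISet n c x := by rw [hi₀]; exact Set.mem_singleton i₀
        exact ⟨1, fun _ => 1, fun _ => d i₀, fun _ => zero_le_one,
          fun _ => ⟨i₀, hi₀mem, rfl⟩, by simp⟩
    · -- at least two active constraints: use x ∉ W*
      have hspan : Submodule.span ℝ (Hset n c x ∪ dCone n c d x) = ⊤ := by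
        by_contra hne
        exact hW ⟨⟨hx, hge2⟩, hne⟩
      rw [eq_top_iff, ← hspan, Submodule.span_le]
      intro u hu
      rcases hu with hu | hu
      · exact Submodule.mem_sup_left ((hH' u).2 hu)
      · exact Submodule.mem_sup_right (Submodule.subset_span hu)
  -- uniqueness of decompositions
  have huniq : ∀ y a b : EucSp J, a ∈ H' → a - y ∈ D' → b ∈ H' → b - y ∈ D' → a = b := by
    intro y a b haH haD hbH hbD
    have h1 : a - b ∈ H' := H'.sub_mem haH hbH
    have h2 : a - b ∈ D' := by
      have := D'.sub_mem haD hbD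
      simpa using this
    exact sub_eq_zero.1 (hdisj _ h1 h2)
  -- existence of decompositions
  have hex : ∀ y : EucSp J, ∃ a, a ∈ H' ∧ a - y ∈ D' := by
    intro y
    have hy : y ∈ H' ⊔ D' := by rw [hsup]; trivial
    obtain ⟨a, haH, b, hbD, hab⟩ := Submodule.mem_sup.1 hy
    refine ⟨a, haH, ?_⟩
    have : a - y = -b := by rw [← hab]; abel
    rw [this]
    exact D'.neg_mem hbD
  choose L₀ hL₀H hL₀D using hex
  have hadd : ∀ y z, L₀ (y + z) = L₀ y + L₀ z := by
    intro y z
    refine huniq (y + z) _ _ (hL₀H _) (hL₀D _) (H'.add_mem (hL₀H y) (hL₀H z)) ?_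
    have h := D'.add_mem (hL₀D y) (hL₀D z)
    have heq : L₀ y + L₀ z - (y + z) = (L₀ y - y) + (L₀ z - z) := by abel
    rw [heq]; exact h
  have hsmul : ∀ (t : ℝ) y, L₀ (t • y) = t • L₀ y := by
    intro t y
    refine huniq (t • y) _ _ (hL₀H _) (hL₀D _) (H'.smul_mem t (hL₀H y)) ?_
    have heq : t • L₀ y - t • y = t • (L₀ y - y) := by rw [smul_sub]
    rw [heq]; exact D'.smul_mem t (hL₀D y)
  have hprop : ∀ y : EucSp J, L₀ y ∈ Hset n c x ∧ L₀ y - y ∈ Submodule.span ℝ (dCone n c d x) :=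
    fun y => ⟨(hH' _).1 (hL₀H y), hL₀D y⟩
  have hLeqL₀ : ∀ L : EucSp J → EucSp J,
      (∀ y : EucSp J, L y ∈ Hset n c x ∧ L y - y ∈ Submodule.span ℝ (dCone n c d x)) →
      ∀ y, L y = L₀ y := by
    intro L hL y
    exact huniq y (L y) (L₀ y) ((hH' _).2 (hL y).1) (hL y).2 (hL₀H y) (hL₀D y)
  constructor
  · exact ⟨L₀, hprop, fun L hL => funext (hLeqL₀ L hL)⟩
  · intro L hL
    have hLeq := hLeqL₀ L hL
    have hcontr : ∀ y, gauge B (L y) ≤ gauge B y := by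
      intro y
      by_contra hgt
      push_neg at hgt
      exact key_contraction hδ hBconvex hB0 hBgeom x (hL y).1 (hL y).2 hgt
    refine ⟨⟨?_, ?_⟩, hcontr, ?_⟩
    · intro a b; rw [hLeq, hLeq, hLeq, hadd]
    · intro t a; rw [hLeq, hLeq, hsmul]
    · intro y hy
      refine ⟨?_, (hL y).1⟩
      have h1 : gauge B (L y) ≤ 1 := le_trans (hcontr y) (gauge_le_one_of_mem hy)
      have h2 := (gauge_le_one_iff_mem_closure hBconvex hBnhds).1 h1
      rwa [hBcompact.isClosed.closure_eq] at h2
end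
end

section
/- Suppose the ESP data satisfies Assumption (B) and fix δ > 0 and a set B as in Assumption (B). Then for each x ∈ ∂G ∖ W*, the adjoint L_x* of the derivative projection operator L_x is the unique linear map ℝ^J → ℝ^J such that for every y ∈ ℝ^J, L_x* y ∈ d(x)^⊥ and L_x* y − y ∈ H_x^⊥; moreover ‖L_x* y‖_{B*} ≤ ‖y‖_{B*} for all y ∈ ℝ^J, i.e., L_x* is a contraction with respect to the gauge of B* and maps B* into B* ∩ d(x)^⊥. -/
open scoped RealInnerProductSpace ENNReal NNReal
open Filter Topology Set MeasureTheory

noncomputable section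

section Helpers

variable {J N : ℕ}

lemma exists_support_vec {B : Set (EucSp J)} (hBconvex : Convex ℝ B)
    (hB0 : (0 : EucSp J) ∈ interior B) {z : EucSp J}
    (hzi : z ∉ interior B) :
    ∃ ν : EucSp J, ‖ν‖ = 1 ∧ (∀ y ∈ B, 0 ≤ ⟪ν, y - z⟫) ∧ ⟪ν, z⟫ < 0 := by
  obtain ⟨f, hf⟩ := geometric_hahn_banach_open_point hBconvex.interior isOpen_interior hzi
  have hfz : 0 < f z := by have := hf 0 hB0; simpa using this
  have hyle : ∀ y ∈ B, f y ≤ f z := by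
    intro y hy
    by_contra hgt
    push_neg at hgt
    have hfy : 0 < f y := hfz.trans hgt
    set t : ℝ := (f y - f z) / (2 * f y) with ht
    have ht0 : 0 < t := div_pos (by linarith) (by linarith)
    have ht1 : t < 1 := by rw [div_lt_one (by linarith)]; linarith
    have hmem : (1 - t) • y + t • (0 : EucSp J) ∈ interior B :=
      hBconvex.combo_closure_interior_mem_interior (subset_closure hy) hB0 (by linarith) ht0
        (by ring)
    have h2 := hf _ hmem
    rw [smul_zero, add_zero, _root_.map_smul] at h2
    have h3 : (1 - t) * f y < f z := by simpa using h2
    have h4 : t * f y = (f y - f z) / 2 := by rw [ht]; field_simp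
    have h5 : (1 - t) * f y = f y - t * f y := by ring
    rw [h5] at h3; linarith
  set v : EucSp J := (InnerProductSpace.toDual ℝ (EucSp J)).symm f with hv
  have hvf : ∀ w : EucSp J, ⟪v, w⟫ = f w := fun w => InnerProductSpace.toDual_symm_apply
  have hvne : v ≠ 0 := by
    intro h
    have h2 := hvf z
    rw [h, inner_zero_left] at h2
    rw [← h2] at hfz
    exact lt_irrefl _ hfz
  have hvpos : 0 < ‖v‖ := norm_pos_iff.2 hvne
  refine ⟨(-(‖v‖)⁻¹) • v, ?_, ?_, ?_⟩
  · rw [norm_smul]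
    simp [abs_of_nonneg (le_of_lt (inv_pos.2 hvpos))]
    field_simp
  · intro y hy
    rw [real_inner_smul_left, inner_sub_right, hvf, hvf]
    have := hyle y hy
    have hc : f y - f z ≤ 0 := by linarith
    have hinv : (0:ℝ) < (‖v‖)⁻¹ := inv_pos.2 hvpos
    nlinarith [mul_nonneg hinv.le (by linarith : (0:ℝ) ≤ f z - f y)]
  · rw [real_inner_smul_left, hvf]
    have hinv : (0:ℝ) < (‖v‖)⁻¹ := inv_pos.2 hvpos
    nlinarith [mul_pos hinv hfz]

end Helpers

section Helpers2

variable {J N : ℕ}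

lemma absorbent_of_int {B : Set (EucSp J)} (hB0 : (0 : EucSp J) ∈ interior B) :
    Absorbent ℝ B :=
  absorbent_nhds_zero (mem_interior_iff_mem_nhds.1 hB0)

lemma gauge_pos_of_ne {B : Set (EucSp J)} (hBcompact : IsCompact B)
    (hB0 : (0 : EucSp J) ∈ interior B) {w : EucSp J} (hw : w ≠ 0) :
    0 < gauge B w := by
  obtain ⟨R, hR⟩ := hBcompact.isBounded.subset_closedBall 0
  have hR' : B ⊆ Metric.closedBall 0 (max R 1) :=
    hR.trans (Metric.closedBall_subset_closedBall (le_max_left _ _))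
  have h1 : ‖w‖ / max R 1 ≤ gauge B w :=
    le_gauge_of_subset_closedBall (absorbent_of_int hB0) (by positivity) hR'
  have : 0 < ‖w‖ / max R 1 := by
    apply div_pos (norm_pos_iff.2 hw); positivity
  linarith

lemma mem_of_gauge_le_one {B : Set (EucSp J)} (hBcompact : IsCompact B)
    (hBconvex : Convex ℝ B) (hB0 : (0 : EucSp J) ∈ interior B) {w : EucSp J}
    (hw : gauge B w ≤ 1) : w ∈ B := by
  have := (gauge_le_one_iff_mem_closure hBconvex (mem_interior_iff_mem_nhds.1 hB0)).1 hw
  rwa [hBcompact.isClosed.closure_eq] at this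

lemma frontier_of_gauge_one {B : Set (EucSp J)} (hBcompact : IsCompact B)
    (hBconvex : Convex ℝ B) (hB0 : (0 : EucSp J) ∈ interior B) {w : EucSp J}
    (hw : gauge B w = 1) : w ∈ B ∧ w ∉ interior B := by
  refine ⟨mem_of_gauge_le_one hBcompact hBconvex hB0 hw.le, fun h => ?_⟩
  have h2 : gauge B w < 1 := interior_subset_gauge_lt_one B h
  rw [hw] at h2
  exact lt_irrefl _ h2

lemma perp_span_dCone {n : Fin N → EucSp J} {c : Fin N → ℝ} {d : Fin N → EucSp J}
    {x ν : EucSp J} (h : ∀ i ∈ ISet n c x, ⟪ν, d i⟫ = 0) :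
    ∀ u ∈ Submodule.span ℝ (dCone n c d x), ⟪ν, u⟫ = 0 := by
  intro u hu
  induction hu using Submodule.span_induction with
  | mem w hw =>
    obtain ⟨k, r, v, hr, hv, rfl⟩ := hw
    rw [inner_sum]
    apply Finset.sum_eq_zero
    intro j _
    obtain ⟨i, hi, hdi⟩ := hv j
    rw [real_inner_smul_right, ← hdi, h i hi, mul_zero]
  | zero => exact inner_zero_right ν
  | add a b _ _ ha hb => rw [inner_add_right, ha, hb, add_zero]
  | smul a w _ hw => rw [real_inner_smul_right, hw, mul_zero]

lemma HD_zero {n d : Fin N → EucSp J} {c : Fin N → ℝ} {x : EucSp J}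
    (δ : ℝ) (hδ : 0 < δ) {B : Set (EucSp J)}
    (hBcompact : IsCompact B) (hBconvex : Convex ℝ B)
    (hB0 : (0 : EucSp J) ∈ interior B)
    (hBgeom : ∀ i : Fin N, ∀ z ∈ frontier B, |⟪z, n i⟫| < δ →
      ∀ ν : EucSp J, ‖ν‖ = 1 → (∀ y ∈ B, 0 ≤ ⟪ν, y - z⟫) → ⟪ν, d i⟫ = 0)
    {w : EucSp J} (hwH : w ∈ Hset n c x)
    (hwD : w ∈ Submodule.span ℝ (dCone n c d x)) : w = 0 := by
  by_contra hw
  set γ := gauge B w with hγ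
  have hγpos : 0 < γ := gauge_pos_of_ne hBcompact hB0 hw
  set z := γ⁻¹ • w with hz
  have hzg : gauge B z = 1 := by
    rw [hz, gauge_smul_of_nonneg (inv_nonneg.2 hγpos.le), smul_eq_mul, ← hγ,
      inv_mul_cancel₀ hγpos.ne']
  obtain ⟨hzB, hzi⟩ := frontier_of_gauge_one hBcompact hBconvex hB0 hzg
  have hzfr : z ∈ frontier B := by
    rw [hBcompact.isClosed.frontier_eq]
    exact ⟨hzB, hzi⟩
  obtain ⟨ν, hν1, hν2, hν3⟩ := exists_support_vec hBconvex hB0 hzi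
  have hperp : ∀ i ∈ ISet n c x, ⟪ν, d i⟫ = 0 := by
    intro i hi
    apply hBgeom i z hzfr _ ν hν1 hν2
    have : ⟪z, n i⟫ = 0 := by
      rw [hz, real_inner_smul_left, hwH i hi, mul_zero]
    rw [this, abs_zero]
    exact hδ
  have h0 : ⟪ν, w⟫ = 0 := perp_span_dCone hperp w hwD
  have : ⟪ν, z⟫ = 0 := by rw [hz, real_inner_smul_right, h0, mul_zero]
  rw [this] at hν3
  exact lt_irrefl _ hν3

end Helpers2

section Helpers3

open scoped Pointwise

variable {J N : ℕ}

set_option maxHeartbeats 1000000 in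
lemma gauge_L_contract {n d : Fin N → EucSp J} {c : Fin N → ℝ} {x : EucSp J}
    (hn : ∀ i, ‖n i‖ = 1)
    (δ : ℝ) (hδ : 0 < δ) {B : Set (EucSp J)}
    (hBcompact : IsCompact B) (hBconvex : Convex ℝ B)
    (hB0 : (0 : EucSp J) ∈ interior B)
    (hBgeom : ∀ i : Fin N, ∀ z ∈ frontier B, |⟪z, n i⟫| < δ →
      ∀ ν : EucSp J, ‖ν‖ = 1 → (∀ y ∈ B, 0 ≤ ⟪ν, y - z⟫) → ⟪ν, d i⟫ = 0)
    (L : EucSp J →ₗ[ℝ] EucSp J)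
    (hL : ∀ y : EucSp J, L y ∈ Hset n c x ∧ L y - y ∈ Submodule.span ℝ (dCone n c d x))
    (z : EucSp J) : gauge B (L z) ≤ gauge B z := by
  by_contra hc
  push_neg at hc
  have hz0 : z ≠ 0 := by
    rintro rfl
    rw [map_zero] at hc
    exact lt_irrefl _ hc
  set γ := gauge B z with hγdef
  set β := gauge B (L z) with hβdef
  have hγpos : 0 < γ := gauge_pos_of_ne hBcompact hB0 hz0
  have hβγ : 0 < β - γ := sub_pos.2 hc
  have habs : Absorbent ℝ B := absorbent_of_int hB0
  obtain ⟨r, hrpos, hball⟩ := Metric.mem_nhds_iff.1 (mem_interior_iff_mem_nhds.1 hB0)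
  have hgauge_le : ∀ u : EucSp J, gauge B u ≤ ‖u‖ / r := by
    intro u
    have h1 : gauge B u ≤ gauge (Metric.ball (0 : EucSp J) r) u :=
      gauge_mono (absorbent_nhds_zero (Metric.ball_mem_nhds 0 hrpos)) hball u
    rwa [gauge_ball hrpos.le] at h1
  set v := L z - z with hvdef
  have hvD : v ∈ Submodule.span ℝ (dCone n c d x) := (hL z).2
  set ε := min (min ((β - γ) * r / (2 * (‖v‖ + 1))) (δ * γ / (2 * (‖z‖ + 1)))) 1 with hεdef
  have hεpos : 0 < ε := by
    apply lt_min (lt_min _ _) one_pos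
    · positivity
    · positivity
  have hε1 : ε ≤ 1 := min_le_right _ _
  have hεA : ε ≤ (β - γ) * r / (2 * (‖v‖ + 1)) := (min_le_left _ _).trans (min_le_left _ _)
  have hεB : ε ≤ δ * γ / (2 * (‖z‖ + 1)) := (min_le_left _ _).trans (min_le_right _ _)
  set w : EucSp J := z + (1 - ε) • v with hwdef
  have hLzw : L z = w + ε • v := by
    rw [hwdef, hvdef]
    rw [add_assoc, ← add_smul]
    have : (1 - ε) + ε = 1 := by ring
    rw [this, one_smul]
    abel
  set g := gauge B w with hgdef
  have hsplit : β ≤ g + ε * (‖v‖ / r) := by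
    calc β = gauge B (w + ε • v) := by rw [← hLzw]
    _ ≤ g + gauge B (ε • v) := gauge_add_le hBconvex habs _ _
    _ ≤ g + ‖ε • v‖ / r := by linarith [hgauge_le (ε • v)]
    _ = g + ε * (‖v‖ / r) := by
        rw [norm_smul, Real.norm_eq_abs, abs_of_pos hεpos]
        ring_nf
  have hεv : ε * (‖v‖ / r) < β - γ := by
    have h2 : ε * ‖v‖ ≤ ((β - γ) * r / (2 * (‖v‖ + 1))) * (‖v‖ + 1) := by
      apply mul_le_mul hεA (by linarith [norm_nonneg v]) (norm_nonneg v)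
      positivity
    have h3 : ((β - γ) * r / (2 * (‖v‖ + 1))) * (‖v‖ + 1) = (β - γ) * r / 2 := by
      field_simp
    rw [h3] at h2
    have h4 : ε * (‖v‖ / r) = (ε * ‖v‖) / r := by ring
    rw [h4, div_lt_iff₀ hrpos]
    nlinarith [mul_pos hβγ hrpos]
  have hgγ : γ < g := by linarith
  have hgpos : 0 < g := hγpos.trans hgγ
  set ζ : EucSp J := g⁻¹ • w with hζdef
  have hζg : gauge B ζ = 1 := by
    rw [hζdef, gauge_smul_of_nonneg (inv_nonneg.2 hgpos.le), smul_eq_mul, ← hgdef,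
      inv_mul_cancel₀ hgpos.ne']
  obtain ⟨hζB, hζi⟩ := frontier_of_gauge_one hBcompact hBconvex hB0 hζg
  have hζfr : ζ ∈ frontier B := by
    rw [hBcompact.isClosed.frontier_eq]
    exact ⟨hζB, hζi⟩
  obtain ⟨ν, hν1, hν2, hν3⟩ := exists_support_vec hBconvex hB0 hζi
  have hperp : ∀ i ∈ ISet n c x, ⟪ν, d i⟫ = 0 := by
    intro i hi
    apply hBgeom i ζ hζfr _ ν hν1 hν2
    have hvn : ⟪v, n i⟫ = -⟪z, n i⟫ := by
      rw [hvdef, inner_sub_left, (hL z).1 i hi]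
      ring
    have hwn : ⟪w, n i⟫ = ε * ⟪z, n i⟫ := by
      rw [hwdef, inner_add_left, real_inner_smul_left, hvn]
      ring
    have hζn : ⟪ζ, n i⟫ = g⁻¹ * (ε * ⟪z, n i⟫) := by
      rw [hζdef, real_inner_smul_left, hwn]
    rw [hζn, abs_mul, abs_mul, abs_of_pos (inv_pos.2 hgpos), abs_of_pos hεpos]
    have hCS : |⟪z, n i⟫| ≤ ‖z‖ := by
      have := abs_real_inner_le_norm z (n i)
      rwa [hn i, mul_one] at this
    have hginv : g⁻¹ ≤ γ⁻¹ := by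
      apply inv_anti₀ hγpos hgγ.le
    have step1 : g⁻¹ * (ε * |⟪z, n i⟫|) ≤ γ⁻¹ * (ε * ‖z‖) := by
      apply mul_le_mul hginv (by nlinarith [abs_nonneg ⟪z, n i⟫]) (by positivity) (by positivity)
    have step2 : γ⁻¹ * (ε * ‖z‖) ≤ γ⁻¹ * ((δ * γ / (2 * (‖z‖ + 1))) * (‖z‖ + 1)) := by
      apply mul_le_mul_of_nonneg_left _ (by positivity)
      apply mul_le_mul hεB (by linarith [norm_nonneg z]) (norm_nonneg z)
      positivity
    have step3 : γ⁻¹ * ((δ * γ / (2 * (‖z‖ + 1))) * (‖z‖ + 1)) = δ / 2 := by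
      field_simp
    linarith
  have hνv : ⟪ν, v⟫ = 0 := perp_span_dCone hperp v hvD
  set ρ := -⟪ν, ζ⟫ with hρdef
  have hρpos : 0 < ρ := by rw [hρdef]; linarith
  have key : ∀ u : EucSp J, -⟪ν, u⟫ ≤ gauge B u * ρ := by
    intro u
    have hlb : ∀ s ∈ {r : ℝ | 0 < r ∧ u ∈ r • B}, -⟪ν, u⟫ / ρ ≤ s := by
      rintro s ⟨hs, b, hbB, rfl⟩
      have h1 : -⟪ν, b⟫ ≤ ρ := by
        have h2 := hν2 b hbB
        rw [inner_sub_right] at h2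
        rw [hρdef]
        linarith
      have h3 : -⟪ν, s • b⟫ = s * -⟪ν, b⟫ := by rw [real_inner_smul_right]; ring
      rw [h3, div_le_iff₀ hρpos]
      nlinarith
    have h4 := le_csInf habs.gauge_set_nonempty hlb
    rw [div_le_iff₀ hρpos] at h4
    exact h4
  have hwgζ : w = g • ζ := by
    rw [hζdef, smul_smul, mul_inv_cancel₀ hgpos.ne', one_smul]
  have h6 : -⟪ν, w⟫ = g * ρ := by
    rw [hwgζ, real_inner_smul_right, hρdef]
    ring
  have h7 : -⟪ν, z⟫ = g * ρ := by
    have h8 : ⟪ν, w⟫ = ⟪ν, z⟫ + (1 - ε) * ⟪ν, v⟫ := by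
      rw [hwdef, inner_add_right, real_inner_smul_right]
    rw [hνv, mul_zero, add_zero] at h8
    rw [← h8]
    exact h6
  have h9 : -⟪ν, z⟫ ≤ γ * ρ := key z
  rw [h7] at h9
  nlinarith

end Helpers3

open scoped Pointwise

/-- **Lemma (adjoint derivative projection operators).**
Fix `δ > 0` and a set `B` as in Assumption (B).  For each `x ∈ ∂G \ W*` and the derivative
projection operator `L = L_x`, the adjoint `L*` is the unique linear map with
`L* y ∈ d(x)^⊥` and `L* y − y ∈ H_x^⊥` for all `y`; moreover `L*` is a contraction for the
gauge of `B*` and maps `B*` into `B* ∩ d(x)^⊥`. -/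
theorem statement14 (J N : ℕ) (hJ : 1 ≤ J) (hN : 1 ≤ N)
    (n d : Fin N → EucSp J) (c : Fin N → ℝ)
    (hn : ∀ i, ‖n i‖ = 1) (hdn : ∀ i, ⟪d i, n i⟫ = 1)
    (hGne : (Gset n c).Nonempty)
    (δ : ℝ) (hδ : 0 < δ) (B : Set (EucSp J))
    (hBcompact : IsCompact B) (hBconvex : Convex ℝ B) (hBsymm : ∀ z ∈ B, -z ∈ B)
    (hB0 : (0 : EucSp J) ∈ interior B)
    (hBgeom : ∀ i : Fin N, ∀ z ∈ frontier B, |⟪z, n i⟫| < δ →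
      ∀ ν : EucSp J, ‖ν‖ = 1 → (∀ y ∈ B, 0 ≤ ⟪ν, y - z⟫) → ⟪ν, d i⟫ = 0) :
    ∀ x ∈ frontier (Gset n c), x ∉ Wstar n c d →
      ∀ L : EucSp J →ₗ[ℝ] EucSp J,
        (∀ y : EucSp J, L y ∈ Hset n c x ∧ L y - y ∈ Submodule.span ℝ (dCone n c d x)) →
        (∀ y : EucSp J,
          LinearMap.adjoint L y ∈ (Submodule.span ℝ (dCone n c d x))ᗮ ∧
          LinearMap.adjoint L y - y ∈ (Submodule.span ℝ (Hset n c x))ᗮ) ∧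
        (∀ A : EucSp J →ₗ[ℝ] EucSp J,
          (∀ y : EucSp J, A y ∈ (Submodule.span ℝ (dCone n c d x))ᗮ ∧
            A y - y ∈ (Submodule.span ℝ (Hset n c x))ᗮ) →
          A = LinearMap.adjoint L) ∧
        (∀ y : EucSp J,
          gauge (dualSet B) (LinearMap.adjoint L y) ≤ gauge (dualSet B) y) ∧
        (∀ y ∈ dualSet B,
          LinearMap.adjoint L y ∈ dualSet B ∧
          LinearMap.adjoint L y ∈ (Submodule.span ℝ (dCone n c d x))ᗮ) := by
  intro x hx hxW L hL
  have hHD : ∀ w : EucSp J, w ∈ Hset n c x → w ∈ Submodule.span ℝ (dCone n c d x) → w = 0 :=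
    fun w hw hw' => HD_zero δ hδ hBcompact hBconvex hB0 hBgeom hw hw'
  have hLcone : ∀ u ∈ Submodule.span ℝ (dCone n c d x), L u = 0 := by
    intro u hu
    apply hHD _ (hL u).1
    have h1 := (hL u).2
    have h2 : L u = u + (L u - u) := by abel
    rw [h2]
    exact Submodule.add_mem _ hu h1
  have hLH : ∀ u ∈ Hset n c x, L u = u := by
    intro u hu
    have h1 : L u - u ∈ Hset n c x := by
      intro i hi
      rw [inner_sub_left, (hL u).1 i hi, hu i hi, sub_zero]
    exact sub_eq_zero.1 (hHD _ h1 (hL u).2)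
  have part1 : ∀ y : EucSp J,
      LinearMap.adjoint L y ∈ (Submodule.span ℝ (dCone n c d x))ᗮ ∧
      LinearMap.adjoint L y - y ∈ (Submodule.span ℝ (Hset n c x))ᗮ := by
    intro y
    constructor
    · rw [Submodule.mem_orthogonal]
      intro u hu
      rw [real_inner_comm, LinearMap.adjoint_inner_left, hLcone u hu, inner_zero_right]
    · rw [Submodule.mem_orthogonal]
      intro u hu
      induction hu using Submodule.span_induction with
      | mem w hw => rw [inner_sub_right, LinearMap.adjoint_inner_right, hLH w hw, sub_self]
      | zero => rw [inner_zero_left]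
      | add a b _ _ ha hb => rw [inner_add_left, ha, hb, add_zero]
      | smul a w _ hw => rw [real_inner_smul_left, hw, mul_zero]
  have hspan : Submodule.span ℝ (Hset n c x ∪ dCone n c d x) = ⊤ := by
    by_cases hNx : x ∈ Nstar n c
    · by_contra hne
      exact hxW ⟨hNx, hne⟩
    · have hcard : (ISet n c x).ncard ≤ 1 := by
        by_contra hge
        push_neg at hge
        exact hNx ⟨hx, hge⟩
      rw [eq_top_iff]
      rintro y -
      rcases (ISet n c x).eq_empty_or_nonempty with hI | ⟨i, hi⟩
      · apply Submodule.subset_span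
        left
        intro j hj
        rw [hI] at hj
        exact absurd hj (Set.notMem_empty j)
      · have hsub : ∀ j ∈ ISet n c x, j = i := fun j hj =>
          (Set.ncard_le_one ((ISet n c x).toFinite)).1 hcard j hj i hi
        have hdi : d i ∈ dCone n c d x := by
          refine ⟨1, fun _ => 1, fun _ => d i, fun _ => zero_le_one, fun _ => ⟨i, hi, rfl⟩, ?_⟩
          simp
        have h1 : y - ⟪y, n i⟫ • d i ∈ Hset n c x := by
          intro j hj
          rcases hsub j hj with rfl
          rw [inner_sub_left, real_inner_smul_left, hdn, mul_one, sub_self]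
        have h2 : y = (y - ⟪y, n i⟫ • d i) + ⟪y, n i⟫ • d i := by abel
        rw [h2]
        exact Submodule.add_mem _ (Submodule.subset_span (Or.inl h1))
          (Submodule.smul_mem _ _ (Submodule.subset_span (Or.inr hdi)))
  have part2 : ∀ A : EucSp J →ₗ[ℝ] EucSp J,
      (∀ y : EucSp J, A y ∈ (Submodule.span ℝ (dCone n c d x))ᗮ ∧
        A y - y ∈ (Submodule.span ℝ (Hset n c x))ᗮ) →
      A = LinearMap.adjoint L := by
    intro A hA
    refine LinearMap.ext fun y => ?_
    have hv1 : A y - LinearMap.adjoint L y ∈ (Submodule.span ℝ (dCone n c d x))ᗮ :=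
      Submodule.sub_mem _ (hA y).1 (part1 y).1
    have hv2 : A y - LinearMap.adjoint L y ∈ (Submodule.span ℝ (Hset n c x))ᗮ := by
      have h3 := Submodule.sub_mem _ (hA y).2 (part1 y).2
      have heq : (A y - y) - (LinearMap.adjoint L y - y) = A y - LinearMap.adjoint L y := by
        abel
      rwa [heq] at h3
    have hut : A y - LinearMap.adjoint L y ∈
        Submodule.span ℝ (Hset n c x) ⊔ Submodule.span ℝ (dCone n c d x) := by
      rw [← Submodule.span_union, hspan]
      trivial
    obtain ⟨a, ha, b, hb, hab⟩ := Submodule.mem_sup.1 hut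
    have h0 : ⟪A y - LinearMap.adjoint L y, A y - LinearMap.adjoint L y⟫ = 0 := by
      nth_rewrite 1 [← hab]
      rw [inner_add_left, (Submodule.mem_orthogonal _ _).1 hv2 a ha,
        (Submodule.mem_orthogonal _ _).1 hv1 b hb, add_zero]
    exact sub_eq_zero.1 (inner_self_eq_zero.1 h0)
  have hcontr := gauge_L_contract hn δ hδ hBcompact hBconvex hB0 hBgeom L hL
  have hLB : ∀ z ∈ B, L z ∈ B := fun z hz =>
    mem_of_gauge_le_one hBcompact hBconvex hB0 ((hcontr z).trans (gauge_le_one_of_mem hz))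
  have hadj_dual : ∀ u ∈ dualSet B, LinearMap.adjoint L u ∈ dualSet B := by
    intro u hu z hz
    rw [LinearMap.adjoint_inner_left]
    exact hu (L z) (hLB z hz)
  have hdualabs : Absorbent ℝ (dualSet B) := by
    obtain ⟨R, hR⟩ := hBcompact.isBounded.subset_closedBall 0
    have hR'pos : (0:ℝ) < max R 1 := lt_of_lt_of_le one_pos (le_max_right _ _)
    apply absorbent_nhds_zero
    rw [Metric.mem_nhds_iff]
    refine ⟨(max R 1)⁻¹, inv_pos.2 hR'pos, ?_⟩
    intro u hu z hz
    have hz' : ‖z‖ ≤ max R 1 := by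
      have h4 := hR hz
      rw [Metric.mem_closedBall, dist_zero_right] at h4
      exact h4.trans (le_max_left _ _)
    have hu' : ‖u‖ < (max R 1)⁻¹ := by rwa [Metric.mem_ball, dist_zero_right] at hu
    calc ⟪u, z⟫ ≤ ‖u‖ * ‖z‖ := real_inner_le_norm u z
    _ ≤ (max R 1)⁻¹ * max R 1 := by
        apply mul_le_mul hu'.le hz' (norm_nonneg z) (by positivity)
    _ = 1 := inv_mul_cancel₀ hR'pos.ne'
  have part3 : ∀ y : EucSp J,
      gauge (dualSet B) (LinearMap.adjoint L y) ≤ gauge (dualSet B) y := by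
    intro y
    apply le_of_forall_gt_imp_ge_of_dense
    intro s hs
    obtain ⟨b, hb0, hbs, hby⟩ := exists_lt_of_gauge_lt hdualabs hs
    obtain ⟨u, hu, rfl⟩ := hby
    have h5 : LinearMap.adjoint L (b • u) ∈ b • dualSet B := by
      rw [_root_.map_smul]
      exact Set.smul_mem_smul_set (hadj_dual u hu)
    exact (gauge_le_of_mem hb0.le h5).trans hbs.le
  exact ⟨part1, part2, part3, fun y hy => ⟨hadj_dual y hy, (part1 y).1⟩⟩
end
end

section
/- Suppose the ESP data satisfies Assumption (B) and fix δ > 0 and a set B as in Assumption (B). Then for each x ∈ ∂G ∖ W* and each y ∈ ℝ^J: L_x* y = y if y ∈ d(x)^⊥, while ‖L_x* y‖_{B*} < ‖y‖_{B*} if y ∉ d(x)^⊥. -/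
open scoped RealInnerProductSpace ENNReal NNReal
open Filter Topology Set MeasureTheory

noncomputable section

section Aux

open Submodule Pointwise

/-- If `ν` is orthogonal to each `d i`, `i ∈ I(x)`, then `ν` is orthogonal to the span of
`d(x)`. -/
lemma spanD_orth {J N : ℕ} {n : Fin N → EucSp J} {c : Fin N → ℝ} {d : Fin N → EucSp J}
    {x : EucSp J} {ν : EucSp J} (hν : ∀ i ∈ ISet n c x, ⟪ν, d i⟫ = 0) :
    ν ∈ (Submodule.span ℝ (dCone n c d x))ᗮ := by
  have hsub : dCone n c d x ⊆ ((Submodule.span ℝ {ν} : Submodule ℝ (EucSp J))ᗮ : Set (EucSp J)) := by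
    rintro u ⟨k, r, v, hr, hv, rfl⟩
    rw [SetLike.mem_coe, Submodule.mem_orthogonal]
    rintro w hw
    obtain ⟨a, rfl⟩ := Submodule.mem_span_singleton.mp hw
    have hzero : ⟪ν, ∑ i, r i • v i⟫ = 0 := by
      rw [inner_sum]
      refine Finset.sum_eq_zero fun i _ => ?_
      obtain ⟨j, hj, hji⟩ := hv i
      rw [real_inner_smul_right, ← hji, hν j hj, mul_zero]
    rw [real_inner_smul_left, hzero, mul_zero]
  have hle : Submodule.span ℝ (dCone n c d x) ≤ (Submodule.span ℝ {ν})ᗮ :=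
    Submodule.span_le.mpr hsub
  rw [Submodule.mem_orthogonal]
  intro u hu
  have h2 := (Submodule.mem_orthogonal _ u).mp (hle hu) ν (Submodule.mem_span_singleton_self ν)
  rw [real_inner_comm]
  exact h2

/-- A closed convex set with `0` in its interior contains every point of gauge at most one. -/
lemma mem_of_gauge_le_one' {J : ℕ} {B : Set (EucSp J)} (hconv : Convex ℝ B)
    (hclosed : IsClosed B) (hB0 : (0 : EucSp J) ∈ interior B) {v : EucSp J}
    (h : gauge B v ≤ 1) : v ∈ B := by
  have h0 : (0 : EucSp J) ∈ B := interior_subset hB0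
  have habs : Absorbent ℝ B := absorbent_nhds_zero (mem_interior_iff_mem_nhds.mp hB0)
  have hmem : ∀ t : ℝ, 0 ≤ t → t < 1 → t • v ∈ B := by
    intro t ht ht1
    apply gauge_lt_one_subset_self hconv h0 habs
    have hsm : gauge B (t • v) = t • gauge B v := gauge_smul_of_nonneg ht v
    rw [Set.mem_setOf_eq, hsm, smul_eq_mul]
    have hgn : (0:ℝ) ≤ gauge B v := gauge_nonneg v
    nlinarith
  have htend : Filter.Tendsto (fun k : ℕ => (1 - ((k:ℝ)+1)⁻¹) • v) Filter.atTop (𝓝 v) := by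
    have h1 : Filter.Tendsto (fun k : ℕ => 1 - ((k:ℝ)+1)⁻¹) Filter.atTop (𝓝 1) := by
      have h2 : Filter.Tendsto (fun k : ℕ => 1 / ((k:ℝ) + 1)) Filter.atTop (𝓝 0) :=
        tendsto_one_div_add_atTop_nhds_zero_nat
      have h3 := Filter.Tendsto.sub (tendsto_const_nhds (x := (1:ℝ))) h2
      simpa [one_div] using h3
    simpa using h1.smul_const v
  refine hclosed.mem_of_tendsto htend (Filter.Eventually.of_forall fun k => hmem _ ?_ ?_)
  · have hk : (1:ℝ) ≤ (k:ℝ) + 1 := by have := Nat.cast_nonneg (α := ℝ) k; linarith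
    have : ((k:ℝ)+1)⁻¹ ≤ 1 := by
      rw [inv_le_one_iff₀]; right; exact hk
    linarith
  · have hk : (0:ℝ) < ((k:ℝ)+1)⁻¹ := by positivity
    linarith

/-- Key geometric step: the projection `p` of `z ∈ B` (i.e. `p ∈ H_x` with `p - z ∈ span d(x)`)
remains in `B`, under the geometric Assumption (B). -/
lemma proj_mem_B {J N : ℕ} {n : Fin N → EucSp J} {c : Fin N → ℝ} {d : Fin N → EucSp J}
    {x : EucSp J} {δ : ℝ} (hδ : 0 < δ) {B : Set (EucSp J)}
    (hBcompact : IsCompact B) (hBconvex : Convex ℝ B)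
    (hB0 : (0 : EucSp J) ∈ interior B)
    (hBgeom : ∀ i : Fin N, ∀ z ∈ frontier B, |⟪z, n i⟫| < δ →
      ∀ ν : EucSp J, ‖ν‖ = 1 → (∀ y ∈ B, 0 ≤ ⟪ν, y - z⟫) → ⟪ν, d i⟫ = 0)
    {z p : EucSp J} (hz : z ∈ B)
    (hpH : ∀ i ∈ ISet n c x, ⟪p, n i⟫ = 0)
    (hpD : p - z ∈ Submodule.span ℝ (dCone n c d x)) : p ∈ B := by
  have hclosed : IsClosed B := hBcompact.isClosed
  set g := gauge B p with hg
  by_cases hg1 : g ≤ 1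
  · exact mem_of_gauge_le_one' hBconvex hclosed hB0 hg1
  exfalso
  push_neg at hg1
  have hgpos : (0:ℝ) < g := lt_trans one_pos hg1
  set w : EucSp J := g⁻¹ • p with hw
  have hwg : gauge B w = 1 := by
    rw [hw, gauge_smul_of_nonneg (inv_nonneg.mpr hgpos.le), smul_eq_mul, ← hg,
      inv_mul_cancel₀ hgpos.ne']
  have hwB : w ∈ B := mem_of_gauge_le_one' hBconvex hclosed hB0 (le_of_eq hwg)
  have hwint : w ∉ interior B := by
    intro hint
    have := interior_subset_gauge_lt_one B hint
    rw [Set.mem_setOf_eq, hwg] at this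
    exact lt_irrefl _ this
  have hwfr : w ∈ frontier B := by
    rw [hclosed.frontier_eq]; exact ⟨hwB, hwint⟩
  -- a supporting functional at `w`
  obtain ⟨f, hf⟩ := geometric_hahn_banach_open_point hBconvex.interior isOpen_interior hwint
  have hfw_pos : 0 < f w := by
    have h0 := hf 0 hB0
    simpa using h0
  have hfB : ∀ b ∈ B, f b ≤ f w := by
    intro b hb
    by_contra hlt
    push_neg at hlt
    have hfb : 0 < f b := lt_trans hfw_pos hlt
    have h1 : f w / f b < 1 := (div_lt_one hfb).mpr hlt
    have h1' : 0 < f w / f b := div_pos hfw_pos hfb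
    set t := (f w / f b + 1) / 2 with ht
    have ht1 : t < 1 := by rw [ht]; linarith
    have ht0 : 0 < t := by rw [ht]; linarith
    have htmem : (1 - t) • (0 : EucSp J) + t • b ∈ interior B :=
      hBconvex.combo_interior_self_mem_interior hB0 hb (by linarith) ht0.le (by ring)
    have hcon' := hf _ htmem
    have hcon : t * f b < f w := by simpa [smul_eq_mul] using hcon' 
    have h2 : f w / f b < t := by rw [ht]; linarith
    have h3 : f w < t * f b := (div_lt_iff₀ hfb).mp h2
    linarith
  -- turn `f` into a vector
  set u : EucSp J := (InnerProductSpace.toDual ℝ (EucSp J)).symm f with hu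
  have hupair : ∀ v : EucSp J, ⟪u, v⟫ = f v := fun v => InnerProductSpace.toDual_symm_apply
  have hune : u ≠ 0 := by
    intro h0
    have := hupair w
    rw [h0, inner_zero_left] at this
    exact absurd this.symm (ne_of_gt hfw_pos)
  have hun : (0:ℝ) < ‖u‖ := norm_pos_iff.mpr hune
  set ν : EucSp J := -(‖u‖⁻¹ • u) with hν
  have hνnorm : ‖ν‖ = 1 := by
    rw [hν, norm_neg, norm_smul, norm_inv, norm_norm, inv_mul_cancel₀ hun.ne']
  have hνin : ∀ b ∈ B, 0 ≤ ⟪ν, b - w⟫ := by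
    intro b hb
    rw [hν, inner_neg_left, real_inner_smul_left, inner_sub_right, hupair, hupair]
    have := hfB b hb
    have hinv : (0:ℝ) ≤ ‖u‖⁻¹ := inv_nonneg.mpr hun.le
    nlinarith
  have hνd : ∀ i ∈ ISet n c x, ⟪ν, d i⟫ = 0 := by
    intro i hi
    apply hBgeom i w hwfr _ ν hνnorm hνin
    have : ⟪w, n i⟫ = 0 := by
      rw [hw, real_inner_smul_left, hpH i hi, mul_zero]
    rw [this, abs_zero]; exact hδ
  have hud : ∀ i ∈ ISet n c x, ⟪u, d i⟫ = 0 := by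
    intro i hi
    have h1 := hνd i hi
    rw [hν, inner_neg_left, real_inner_smul_left, neg_eq_zero] at h1
    rcases mul_eq_zero.mp h1 with h | h
    · exact absurd h (inv_ne_zero hun.ne')
    · exact h
  have huD : u ∈ (Submodule.span ℝ (dCone n c d x))ᗮ := spanD_orth hud
  have huz : ⟪p - z, u⟫ = 0 := (Submodule.mem_orthogonal _ u).mp huD _ hpD
  have hfz : f p = f z := by
    have h1 : ⟪u, p - z⟫ = 0 := by rw [real_inner_comm]; exact huz
    rw [inner_sub_right, hupair, hupair] at h1
    linarith
  have hpw : f p = g * f w := by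
    have : p = g • w := by rw [hw, smul_inv_smul₀ hgpos.ne']
    rw [this, _root_.map_smul, smul_eq_mul]
  have hzw := hfB z hz
  nlinarith

/-- The gauge of the dual set is the maximum of the inner product over `B`. -/
lemma gauge_dual_eq {J : ℕ} {B : Set (EucSp J)} (h0 : (0 : EucSp J) ∈ B)
    {u z₁ : EucSp J} (hz₁ : z₁ ∈ B) (hmax : ∀ z ∈ B, ⟪u, z⟫ ≤ ⟪u, z₁⟫) :
    gauge (dualSet B) u = ⟪u, z₁⟫ := by
  have hM0 : 0 ≤ ⟪u, z₁⟫ := by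
    have := hmax 0 h0
    simpa using this
  have hset : {r : ℝ | 0 < r ∧ u ∈ r • dualSet B} = {r : ℝ | 0 < r ∧ ⟪u, z₁⟫ ≤ r} := by
    ext r
    simp only [Set.mem_setOf_eq]
    constructor
    · rintro ⟨hr, hu⟩
      refine ⟨hr, ?_⟩
      rw [Set.mem_smul_set_iff_inv_smul_mem₀ hr.ne'] at hu
      have h1 : ⟪r⁻¹ • u, z₁⟫ ≤ 1 := hu z₁ hz₁
      rw [real_inner_smul_left, inv_mul_le_iff₀ hr, mul_one] at h1
      exact h1
    · rintro ⟨hr, hM⟩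
      refine ⟨hr, ?_⟩
      rw [Set.mem_smul_set_iff_inv_smul_mem₀ hr.ne']
      intro z hz
      rw [real_inner_smul_left, inv_mul_le_iff₀ hr, mul_one]
      exact le_trans (hmax z hz) hM
  show sInf {r : ℝ | 0 < r ∧ u ∈ r • dualSet B} = ⟪u, z₁⟫
  rw [hset]
  rcases eq_or_lt_of_le hM0 with h | h
  · rw [← h]
    have : {r : ℝ | 0 < r ∧ (0:ℝ) ≤ r} = Set.Ioi 0 := by
      ext r; simp only [Set.mem_setOf_eq, Set.mem_Ioi]
      exact ⟨fun ⟨h1, _⟩ => h1, fun h1 => ⟨h1, h1.le⟩⟩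
    rw [this, csInf_Ioi]
  · have : {r : ℝ | 0 < r ∧ ⟪u, z₁⟫ ≤ r} = Set.Ici ⟪u, z₁⟫ := by
      ext r; simp only [Set.mem_setOf_eq, Set.mem_Ici]
      exact ⟨fun ⟨_, h2⟩ => h2, fun h2 => ⟨lt_of_lt_of_le h h2, h2⟩⟩
    rw [this, csInf_Ici]

end Aux

/-- **Lemma (strict contraction property of the adjoint projection operators).**
Fix `δ > 0` and a set `B` as in Assumption (B).  For each `x ∈ ∂G \ W*`, the adjoint `L_x*`
of the derivative projection operator fixes every `y ∈ d(x)^⊥`, and strictly decreases the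
`B*`-gauge of every `y ∉ d(x)^⊥`. -/
theorem statement15 (J N : ℕ) (hJ : 1 ≤ J) (hN : 1 ≤ N)
    (n d : Fin N → EucSp J) (c : Fin N → ℝ)
    (hn : ∀ i, ‖n i‖ = 1) (hdn : ∀ i, ⟪d i, n i⟫ = 1)
    (hGne : (Gset n c).Nonempty)
    (δ : ℝ) (hδ : 0 < δ) (B : Set (EucSp J))
    (hBcompact : IsCompact B) (hBconvex : Convex ℝ B) (hBsymm : ∀ z ∈ B, -z ∈ B)
    (hB0 : (0 : EucSp J) ∈ interior B)
    (hBgeom : ∀ i : Fin N, ∀ z ∈ frontier B, |⟪z, n i⟫| < δ →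
      ∀ ν : EucSp J, ‖ν‖ = 1 → (∀ y ∈ B, 0 ≤ ⟪ν, y - z⟫) → ⟪ν, d i⟫ = 0) :
    ∀ x ∈ frontier (Gset n c), x ∉ Wstar n c d →
      ∀ L : EucSp J →ₗ[ℝ] EucSp J,
        (∀ y : EucSp J, L y ∈ Hset n c x ∧ L y - y ∈ Submodule.span ℝ (dCone n c d x)) →
        ∀ y : EucSp J,
          (y ∈ (Submodule.span ℝ (dCone n c d x))ᗮ → LinearMap.adjoint L y = y) ∧
          (y ∉ (Submodule.span ℝ (dCone n c d x))ᗮ →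
            gauge (dualSet B) (LinearMap.adjoint L y) < gauge (dualSet B) y) := by
  intro x hx hxW L hL y
  have hadj : ∀ w v : EucSp J, ⟪LinearMap.adjoint L w, v⟫ = ⟪w, L v⟫ := fun w v =>
    LinearMap.adjoint_inner_left L v w
  constructor
  · intro hy
    apply ext_inner_right ℝ
    intro v
    rw [hadj]
    have h0 : ⟪L v - v, y⟫ = 0 := (Submodule.mem_orthogonal _ y).mp hy _ ((hL v).2)
    have h1 : ⟪y, L v - v⟫ = 0 := by rw [real_inner_comm]; exact h0
    rw [inner_sub_right] at h1
    linarith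
  · intro hy
    have hyne : y ≠ 0 := fun h => hy (h ▸ Submodule.zero_mem _)
    have h0B : (0 : EucSp J) ∈ B := interior_subset hB0
    have hLB : ∀ z ∈ B, L z ∈ B := fun z hz =>
      proj_mem_B hδ hBcompact hBconvex hB0 hBgeom hz ((hL z).1) ((hL z).2)
    have hcont1 : ContinuousOn (fun z : EucSp J => ⟪LinearMap.adjoint L y, z⟫) B :=
      (Continuous.inner continuous_const continuous_id).continuousOn
    have hcont2 : ContinuousOn (fun z : EucSp J => ⟪y, z⟫) B :=
      (Continuous.inner continuous_const continuous_id).continuousOn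
    obtain ⟨z₁, hz₁B, hz₁max⟩ := hBcompact.exists_isMaxOn ⟨0, h0B⟩ hcont1
    obtain ⟨z₂, hz₂B, hz₂max⟩ := hBcompact.exists_isMaxOn ⟨0, h0B⟩ hcont2
    have hz₁max' : ∀ z ∈ B, ⟪LinearMap.adjoint L y, z⟫ ≤ ⟪LinearMap.adjoint L y, z₁⟫ :=
      fun z hz => hz₁max hz
    have hz₂max' : ∀ z ∈ B, ⟪y, z⟫ ≤ ⟪y, z₂⟫ := fun z hz => hz₂max hz
    rw [gauge_dual_eq h0B hz₁B hz₁max', gauge_dual_eq h0B hz₂B hz₂max']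
    have hkey : ⟪LinearMap.adjoint L y, z₁⟫ = ⟪y, L z₁⟫ := hadj y z₁
    have hle : ⟪LinearMap.adjoint L y, z₁⟫ ≤ ⟪y, z₂⟫ := by
      rw [hkey]; exact hz₂max' _ (hLB z₁ hz₁B)
    refine lt_of_le_of_ne hle ?_
    intro heq
    set w₀ := L z₁ with hw₀
    have hw₀B : w₀ ∈ B := hLB z₁ hz₁B
    have hw₀max : ∀ b ∈ B, ⟪y, b⟫ ≤ ⟪y, w₀⟫ := by
      intro b hb
      rw [hw₀, ← hkey, heq]
      exact hz₂max' b hb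
    obtain ⟨ε, hε, hball⟩ := Metric.mem_nhds_iff.mp (mem_interior_iff_mem_nhds.mp hB0)
    have hyn : (0:ℝ) < ‖y‖ := norm_pos_iff.mpr hyne
    have hbmem : ((ε/2) * ‖y‖⁻¹) • y ∈ B := by
      apply hball
      rw [Metric.mem_ball, dist_zero_right, norm_smul, Real.norm_eq_abs,
        abs_of_nonneg (by positivity)]
      rw [mul_assoc, inv_mul_cancel₀ hyn.ne', mul_one]
      linarith
    have hmpos : 0 < ⟪y, w₀⟫ := by
      have h1 := hw₀max _ hbmem
      rw [real_inner_smul_right, real_inner_self_eq_norm_sq] at h1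
      have h2 : ε / 2 * ‖y‖⁻¹ * ‖y‖ ^ 2 = ε / 2 * ‖y‖ := by
        field_simp
      rw [h2] at h1
      have h3 : 0 < ε / 2 * ‖y‖ := by positivity
      linarith
    have hw₀int : w₀ ∉ interior B := by
      intro hint
      obtain ⟨ε', hε', hball'⟩ := Metric.mem_nhds_iff.mp (mem_interior_iff_mem_nhds.mp hint)
      have hb' : w₀ + ((ε'/2) * ‖y‖⁻¹) • y ∈ B := by
        apply hball'
        rw [Metric.mem_ball, dist_self_add_left, norm_smul, Real.norm_eq_abs,
          abs_of_nonneg (by positivity)]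
        rw [mul_assoc, inv_mul_cancel₀ hyn.ne', mul_one]
        linarith
      have h1 := hw₀max _ hb'
      rw [inner_add_right, real_inner_smul_right, real_inner_self_eq_norm_sq] at h1
      have h2 : ε' / 2 * ‖y‖⁻¹ * ‖y‖ ^ 2 = ε' / 2 * ‖y‖ := by
        field_simp
      rw [h2] at h1
      have h3 : 0 < ε' / 2 * ‖y‖ := by positivity
      linarith
    have hw₀fr : w₀ ∈ frontier B := by
      rw [hBcompact.isClosed.frontier_eq]; exact ⟨hw₀B, hw₀int⟩
    have hdi : ∀ i ∈ ISet n c x, ⟪y, d i⟫ = 0 := by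
      intro i hi
      have hni : |⟪w₀, n i⟫| < δ := by
        rw [hw₀, (hL z₁).1 i hi, abs_zero]; exact hδ
      have hνnorm : ‖-(‖y‖⁻¹ • y)‖ = 1 := by
        rw [norm_neg, norm_smul, norm_inv, norm_norm, inv_mul_cancel₀ hyn.ne']
      have hνin : ∀ b ∈ B, 0 ≤ ⟪-(‖y‖⁻¹ • y), b - w₀⟫ := by
        intro b hb
        rw [inner_neg_left, real_inner_smul_left, inner_sub_right]
        have h2 := hw₀max b hb
        have hinv : (0:ℝ) ≤ ‖y‖⁻¹ := inv_nonneg.mpr hyn.le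
        nlinarith
      have hν := hBgeom i w₀ hw₀fr hni _ hνnorm hνin
      rw [inner_neg_left, real_inner_smul_left, neg_eq_zero] at hν
      rcases mul_eq_zero.mp hν with h | h
      · exact absurd h (inv_ne_zero hyn.ne')
      · exact h
    exact hy (spanD_orth hdi)
end
end
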